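/- arXiv:1705.01433 — 4 statements merged into one kernel-verified Lean document; each statement's English description precedes it below -/
import Mathlib

section
/- Consider a parity bidding game G = (V, E, p). A bottom strongly-connected component (BSCC) of G is a strongly-connected component with no edges leaving it. Let R ⊆ V be the set of vertices of BSCCs whose maximal parity index is odd and let S ⊆ V be the set of vertices of BSCCs whose maximal parity index is even. Let G' be the Richman game obtained from G by making R the target set of Player 1 and S the target set of Player 2 (Player 1 wins an outcome of G' iff it reaches R before reaching S). Then for every v ∈ V, the threshold budget of v in G equals the threshold budget of v in G'. -/
open scoped Classical

/-! ### Bidding games: the basic model -/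

/-- One round of a bidding game: the vertex the token was moved to, the winning bid,
and whether Player 1 won the bidding. -/
structure BidRound (V : Type) where
  dest : V
  bid : ℝ
  p1Won : Bool

/-- A history: the initial vertex together with the list of rounds played so far. -/
structure Hist (V : Type) where
  init : V
  rounds : List (BidRound V)

/-- The vertex currently occupied by the token. -/
def Hist.cur {V : Type} (h : Hist V) : V :=
  h.rounds.getLast?.elim h.init BidRound.dest

/-- The net payment of Player 1 so far (bids paid upon winning minus bids received). -/
def Hist.pay1 {V : Type} (h : Hist V) : ℝ :=
  (h.rounds.map (fun r => if r.p1Won then r.bid else -r.bid)).sum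

/-- The net payment of Player 2 so far. -/
def Hist.pay2 {V : Type} (h : Hist V) : ℝ := -h.pay1

/-- The sum of the weights of all vertices visited so far (including the current one). -/
def Hist.energyAll {V : Type} (w : V → ℤ) (h : Hist V) : ℤ :=
  w h.init + (h.rounds.map (fun r => w r.dest)).sum

/-- A strategy: maps a history to a bid and the vertex to move to upon winning. -/
def Strat (V : Type) := Hist V → ℝ × V

/-- A tie-breaking mechanism: decides at each history whether Player 1 wins a tie. -/
def TieBreak (V : Type) := Hist V → Bool

/-- A bidding game: a finite directed graph in which every vertex has an outgoing edge. -/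
structure BiddingGame (V : Type) [Fintype V] where
  E : V → V → Prop
  total : ∀ v, ∃ u, E v u

/-- One round of play: both players bid; the higher bidder (Player 1 upon a tie won by
the tie-breaking mechanism) pays his bid to the other player and moves the token. -/
noncomputable def extend {V : Type} (tb : TieBreak V) (f1 f2 : Strat V) (h : Hist V) : Hist V :=
  if (f2 h).1 < (f1 h).1 ∨ ((f1 h).1 = (f2 h).1 ∧ tb h = true) then
    ⟨h.init, h.rounds ++ [⟨(f1 h).2, (f1 h).1, true⟩]⟩
  else
    ⟨h.init, h.rounds ++ [⟨(f2 h).2, (f2 h).1, false⟩]⟩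

/-- The history after `n` rounds, starting at `v0`. -/
noncomputable def play {V : Type} (tb : TieBreak V) (f1 f2 : Strat V) (v0 : V) : ℕ → Hist V
  | 0 => ⟨v0, []⟩
  | n + 1 => extend tb f1 f2 (play tb f1 f2 v0 n)

/-- The vertex occupied after `n` rounds. -/
noncomputable def visit {V : Type} (tb : TieBreak V) (f1 f2 : Strat V) (v0 : V) (n : ℕ) : V :=
  (play tb f1 f2 v0 n).cur

/-- The energy (sum of weights) of the prefix of length `n` of the outcome. -/
noncomputable def energy {V : Type} (w : V → ℤ) (tb : TieBreak V) (f1 f2 : Strat V) (v0 : V)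
    (n : ℕ) : ℤ :=
  ∑ i ∈ Finset.range n, w (visit tb f1 f2 v0 i)

/-- Player 1's strategy is legal w.r.t. the initial budget `B`: along any play, his bids
are nonnegative, never exceed his current budget, and his moves follow edges. -/
def Legal1 {V : Type} [Fintype V] (G : BiddingGame V) (f1 : Strat V) (B : ℝ) : Prop :=
  ∀ (tb : TieBreak V) (f2 : Strat V) (v0 : V) (n : ℕ),
    0 ≤ (f1 (play tb f1 f2 v0 n)).1 ∧
    (f1 (play tb f1 f2 v0 n)).1 ≤ B - (play tb f1 f2 v0 n).pay1 ∧
    G.E (play tb f1 f2 v0 n).cur (f1 (play tb f1 f2 v0 n)).2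

/-- Player 2's strategy is legal w.r.t. the initial budget `B`. -/
def Legal2 {V : Type} [Fintype V] (G : BiddingGame V) (f2 : Strat V) (B : ℝ) : Prop :=
  ∀ (tb : TieBreak V) (f1 : Strat V) (v0 : V) (n : ℕ),
    0 ≤ (f2 (play tb f1 f2 v0 n)).1 ∧
    (f2 (play tb f1 f2 v0 n)).1 ≤ B - (play tb f1 f2 v0 n).pay2 ∧
    G.E (play tb f1 f2 v0 n).cur (f2 (play tb f1 f2 v0 n)).2

/-- A memoryless strategy: its action depends only on the current vertex and the
player's current budget (equivalently, the net payments so far). -/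
def Memoryless {V : Type} (f : Strat V) : Prop :=
  ∀ h h' : Hist V, h.cur = h'.cur → h.pay1 = h'.pay1 → f h = f h'

/-- A memoryless strategy in a mean-payoff game: its action depends only on the current
vertex, the player's current budget, and the current energy level. -/
def MemorylessE {V : Type} (w : V → ℤ) (f : Strat V) : Prop :=
  ∀ h h' : Hist V, h.cur = h'.cur → h.pay1 = h'.pay1 →
    h.energyAll w = h'.energyAll w → f h = f h'

/-- A constant-memory strategy for Player 2 (Max): the action depends only on the current
vertex, Player 2's current budget, the current energy level, and a memory state ranging
over a finite set (of size independent of the history), updated round by round. -/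
def FiniteMemory2 {V : Type} (w : V → ℤ) (f : Strat V) (B : ℝ) : Prop :=
  ∃ (M : Type) (_ : Fintype M) (m0 : M) (upd : M → BidRound V → M)
    (act : V → ℝ → ℤ → M → ℝ × V),
    ∀ h : Hist V, f h = act h.cur (B - h.pay2) (h.energyAll w) (h.rounds.foldl upd m0)

/-- Strong connectivity of the arena. -/
def StronglyConnected {V : Type} [Fintype V] (G : BiddingGame V) : Prop :=
  ∀ v u : V, Relation.ReflTransGen G.E v u

/-! ### Richman games -/

/-- The successors of `v`. -/
noncomputable def BiddingGame.adj {V : Type} [Fintype V] (G : BiddingGame V) (v : V) :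
    Finset V :=
  Finset.univ.filter (fun u => G.E v u)

lemma BiddingGame.adj_nonempty {V : Type} [Fintype V] (G : BiddingGame V) (v : V) :
    (G.adj v).Nonempty := by
  obtain ⟨u, hu⟩ := G.total v
  exact ⟨u, by simpa [BiddingGame.adj] using hu⟩

/-- The Richman function `R(v, i)`. -/
noncomputable def Rfun {V : Type} [Fintype V] (G : BiddingGame V) (vR vS : V) :
    ℕ → V → ℝ
  | 0, v => if v = vR then 0 else 1
  | i + 1, v =>
      if v = vR then 0
      else if v = vS then 1
      else ((G.adj v).sup' (G.adj_nonempty v) (Rfun G vR vS i) +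
            (G.adj v).inf' (G.adj_nonempty v) (Rfun G vR vS i)) / 2

/-- The limit Richman function `R(v) = lim_i R(v, i)`; since `i ↦ R(v, i)` is
nonincreasing, the limit equals the infimum. -/
noncomputable def Rlim {V : Type} [Fintype V] (G : BiddingGame V) (vR vS : V)
    (v : V) : ℝ :=
  ⨅ i : ℕ, Rfun G vR vS i v

/-- Player 1 wins an outcome of a Richman game: `vR` is reached, and `vS` is not
reached before that (the game ends once a target is reached). -/
def Win1Richman {V : Type} (tb : TieBreak V) (f1 f2 : Strat V) (v0 vR vS : V) : Prop :=
  ∃ n, visit tb f1 f2 v0 n = vR ∧ ∀ m < n, visit tb f1 f2 v0 m ≠ vS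

/-- Player 2 wins an outcome of a Richman game: `vS` is reached first, or no target is
ever reached. -/
def Win2Richman {V : Type} (tb : TieBreak V) (f1 f2 : Strat V) (v0 vR vS : V) : Prop :=
  (∃ n, visit tb f1 f2 v0 n = vS ∧ ∀ m < n, visit tb f1 f2 v0 m ≠ vR) ∨
  (∀ n, visit tb f1 f2 v0 n ≠ vR ∧ visit tb f1 f2 v0 n ≠ vS)

/-- Player 1 has a winning strategy in the Richman game from `v0` with budget `B`. -/
def Win1RichmanFrom {V : Type} [Fintype V] (G : BiddingGame V) (vR vS v0 : V)
    (B : ℝ) : Prop :=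
  ∀ tb : TieBreak V, ∃ f1 : Strat V, Legal1 G f1 B ∧
    ∀ f2 : Strat V, Legal2 G f2 (1 - B) → Win1Richman tb f1 f2 v0 vR vS

/-- Player 2 has a winning strategy in the Richman game from `v0` with budget `B`. -/
def Win2RichmanFrom {V : Type} [Fintype V] (G : BiddingGame V) (vR vS v0 : V)
    (B : ℝ) : Prop :=
  ∀ tb : TieBreak V, ∃ f2 : Strat V, Legal2 G f2 B ∧
    ∀ f1 : Strat V, Legal1 G f1 (1 - B) → Win2Richman tb f1 f2 v0 vR vS

/-- `t` is a threshold budget at `v` in the Richman game. -/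
def IsThreshRichman {V : Type} [Fintype V] (G : BiddingGame V) (vR vS v : V)
    (t : ℝ) : Prop :=
  (∀ B : ℝ, B ≤ 1 → t < B → Win1RichmanFrom G vR vS v B) ∧
  (∀ B : ℝ, B ≤ 1 → 1 - t < B → Win2RichmanFrom G vR vS v B)

/-! ### Richman games with target sets -/

def Win1RichmanSet {V : Type} (tb : TieBreak V) (f1 f2 : Strat V) (v0 : V)
    (R S : Set V) : Prop :=
  ∃ n, visit tb f1 f2 v0 n ∈ R ∧ ∀ m < n, visit tb f1 f2 v0 m ∉ S

def Win2RichmanSet {V : Type} (tb : TieBreak V) (f1 f2 : Strat V) (v0 : V)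
    (R S : Set V) : Prop :=
  (∃ n, visit tb f1 f2 v0 n ∈ S ∧ ∀ m < n, visit tb f1 f2 v0 m ∉ R) ∨
  (∀ n, visit tb f1 f2 v0 n ∉ R ∧ visit tb f1 f2 v0 n ∉ S)

/-- `t` is a threshold budget at `v` in the Richman game with target sets `R` and `S`. -/
def IsThreshRichmanSet {V : Type} [Fintype V] (G : BiddingGame V) (R S : Set V)
    (v : V) (t : ℝ) : Prop :=
  (∀ B : ℝ, B ≤ 1 → t < B → ∀ tb : TieBreak V, ∃ f1 : Strat V, Legal1 G f1 B ∧
      ∀ f2 : Strat V, Legal2 G f2 (1 - B) → Win1RichmanSet tb f1 f2 v R S) ∧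
  (∀ B : ℝ, B ≤ 1 → 1 - t < B → ∀ tb : TieBreak V, ∃ f2 : Strat V, Legal2 G f2 B ∧
      ∀ f1 : Strat V, Legal1 G f1 (1 - B) → Win2RichmanSet tb f1 f2 v R S)

/-! ### Reachability games -/

/-- `t` is a threshold budget at `v` in the reachability game with target set `T`. -/
def IsThreshReach {V : Type} [Fintype V] (G : BiddingGame V) (T : Set V) (v : V)
    (t : ℝ) : Prop :=
  (∀ B : ℝ, B ≤ 1 → t < B → ∀ tb : TieBreak V, ∃ f1 : Strat V, Legal1 G f1 B ∧
      ∀ f2 : Strat V, Legal2 G f2 (1 - B) → ∃ n, visit tb f1 f2 v n ∈ T) ∧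
  (∀ B : ℝ, B ≤ 1 → 1 - t < B → ∀ tb : TieBreak V, ∃ f2 : Strat V, Legal2 G f2 B ∧
      ∀ f1 : Strat V, Legal1 G f1 (1 - B) → ∀ n, visit tb f1 f2 v n ∉ T)

/-! ### Parity games -/

/-- Player 1 wins an outcome of a parity game: the maximal parity index visited
infinitely often is odd. -/
def Win1Parity {V : Type} (p : V → ℕ) (tb : TieBreak V) (f1 f2 : Strat V)
    (v0 : V) : Prop :=
  Odd (sSup {k : ℕ | ∀ N : ℕ, ∃ n ≥ N, p (visit tb f1 f2 v0 n) = k})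

def Win1ParityFrom {V : Type} [Fintype V] (G : BiddingGame V) (p : V → ℕ) (v0 : V)
    (B : ℝ) : Prop :=
  ∀ tb : TieBreak V, ∃ f1 : Strat V, Legal1 G f1 B ∧
    ∀ f2 : Strat V, Legal2 G f2 (1 - B) → Win1Parity p tb f1 f2 v0

def Win2ParityFrom {V : Type} [Fintype V] (G : BiddingGame V) (p : V → ℕ) (v0 : V)
    (B : ℝ) : Prop :=
  ∀ tb : TieBreak V, ∃ f2 : Strat V, Legal2 G f2 B ∧
    ∀ f1 : Strat V, Legal1 G f1 (1 - B) → ¬ Win1Parity p tb f1 f2 v0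

/-- `t` is a threshold budget at `v` in the parity game. -/
def IsThreshParity {V : Type} [Fintype V] (G : BiddingGame V) (p : V → ℕ) (v : V)
    (t : ℝ) : Prop :=
  (∀ B : ℝ, B ≤ 1 → t < B → Win1ParityFrom G p v B) ∧
  (∀ B : ℝ, B ≤ 1 → 1 - t < B → Win2ParityFrom G p v B)

/-! ### Mean-payoff games (Min is Player 1, Max is Player 2) -/

/-- The mean-payoff value of the outcome. -/
noncomputable def mpval {V : Type} (w : V → ℤ) (tb : TieBreak V) (f1 f2 : Strat V)
    (v0 : V) : ℝ :=
  Filter.liminf (fun n : ℕ => (energy w tb f1 f2 v0 n : ℝ) / n) Filter.atTop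

/-- Min can guarantee a nonpositive mean-payoff value from `v0` with budget `B`. -/
def MinWinsFrom {V : Type} [Fintype V] (G : BiddingGame V) (w : V → ℤ) (v0 : V)
    (B : ℝ) : Prop :=
  ∀ tb : TieBreak V, ∃ f1 : Strat V, Legal1 G f1 B ∧
    ∀ f2 : Strat V, Legal2 G f2 (1 - B) → mpval w tb f1 f2 v0 ≤ 0

/-- Max can guarantee a strictly positive mean-payoff value from `v0` with budget `B`. -/
def MaxWinsFrom {V : Type} [Fintype V] (G : BiddingGame V) (w : V → ℤ) (v0 : V)
    (B : ℝ) : Prop :=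
  ∀ tb : TieBreak V, ∃ f2 : Strat V, Legal2 G f2 B ∧
    ∀ f1 : Strat V, Legal1 G f1 (1 - B) → 0 < mpval w tb f1 f2 v0

/-- `t` is a threshold budget at `v` in the mean-payoff game. -/
def IsThreshMP {V : Type} [Fintype V] (G : BiddingGame V) (w : V → ℤ) (v : V)
    (t : ℝ) : Prop :=
  (∀ B : ℝ, B ≤ 1 → t < B → MinWinsFrom G w v B) ∧
  (∀ B : ℝ, B ≤ 1 → 1 - t < B → MaxWinsFrom G w v B)

/-! ### The split graph `G^u` and the weighted Richman function -/

/-- Edges of `G^u`: `u` is split into `u_s = Sum.inl u` (keeping the outgoing edges of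
`u`, with no incoming edges) and `u_t = Sum.inr ()` (receiving the edges into `u`, with
no outgoing edges). -/
def splitE {V : Type} [Fintype V] (G : BiddingGame V) (u : V) :
    V ⊕ Unit → V ⊕ Unit → Prop
  | Sum.inl v, Sum.inl x => G.E v x ∧ x ≠ u
  | Sum.inl v, Sum.inr _ => G.E v u
  | Sum.inr _, _ => False

/-- The successors in `G^u` of a vertex `v ∈ V` (i.e. of `Sum.inl v`). -/
noncomputable def succu {V : Type} [Fintype V] (G : BiddingGame V) (u v : V) :
    Finset (V ⊕ Unit) :=
  Finset.univ.filter (fun y => splitE G u (Sum.inl v) y)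

lemma succu_nonempty {V : Type} [Fintype V] (G : BiddingGame V) (u v : V) :
    (succu G u v).Nonempty := by
  obtain ⟨x, hx⟩ := G.total v
  by_cases hxu : x = u
  · refine ⟨Sum.inr (), ?_⟩
    simp only [succu, Finset.mem_filter, Finset.mem_univ, true_and]
    exact show G.E v u from hxu ▸ hx
  · refine ⟨Sum.inl x, ?_⟩
    simp only [succu, Finset.mem_filter, Finset.mem_univ, true_and]
    exact show G.E v x ∧ x ≠ u from ⟨hx, hxu⟩

/-- `W(v⁺)`: the maximal value of `W` over the `G^u`-successors of `v`. -/
noncomputable def supWu {V : Type} [Fintype V] (G : BiddingGame V) (u : V)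
    (W : V ⊕ Unit → ℝ) (v : V) : ℝ :=
  (succu G u v).sup' (succu_nonempty G u v) W

/-- `W(v⁻)`: the minimal value of `W` over the `G^u`-successors of `v`. -/
noncomputable def infWu {V : Type} [Fintype V] (G : BiddingGame V) (u : V)
    (W : V ⊕ Unit → ℝ) (v : V) : ℝ :=
  (succu G u v).inf' (succu_nonempty G u v) W

/-- `W` is a weighted Richman function for the weights `w`, split at `u`:
`W(u_t) = 0` and `W(v) = (W(v⁺) + W(v⁻))/2 + w(v)` for every `v ∈ V`
(`Sum.inl v` represents `v`, in particular `Sum.inl u` is `u_s`). -/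
def IsWRichman {V : Type} [Fintype V] (G : BiddingGame V) (w : V → ℝ) (u : V)
    (W : V ⊕ Unit → ℝ) : Prop :=
  W (Sum.inr ()) = 0 ∧
  ∀ v : V, W (Sum.inl v) = (supWu G u W v + infWu G u W v) / 2 + w v

/-- Projection of `G^u`-vertices back to vertices of `G`. -/
def projU {V : Type} (u : V) : V ⊕ Unit → V := Sum.elim id (fun _ => u)

/-- `w_M`: the maximal absolute value of `W` over `V`. -/
noncomputable def wMax {V : Type} [Fintype V] (W : V ⊕ Unit → ℝ) (u : V) : ℝ :=
  Finset.univ.sup' ⟨u, Finset.mem_univ u⟩ (fun v : V => |W (Sum.inl v)|)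

/-- `b_M`: the maximal value of the bid `(W(v⁺) − W(v⁻))/2` over `V`. -/
noncomputable def bMax {V : Type} [Fintype V] (G : BiddingGame V) (u : V)
    (W : V ⊕ Unit → ℝ) : ℝ :=
  Finset.univ.sup' ⟨u, Finset.mem_univ u⟩
    (fun v : V => (supWu G u W v - infWu G u W v) / 2)

/-- A vertex `v` belongs to a bottom strongly-connected component (BSCC): every vertex
reachable from `v` can reach `v` back. -/
def InBSCC {V : Type} [Fintype V] (G : BiddingGame V) (v : V) : Prop :=
  ∀ x : V, Relation.ReflTransGen G.E v x → Relation.ReflTransGen G.E x v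

/-- The maximal parity index occurring in the set of vertices reachable from `v`
(for `v` in a BSCC, this is the maximal index of its BSCC). -/
noncomputable def bsccMaxIndex {V : Type} [Fintype V] (G : BiddingGame V) (p : V → ℕ)
    (v : V) : ℕ :=
  (Finset.univ.filter (fun x => Relation.ReflTransGen G.E v x)).sup'
    ⟨v, Finset.mem_filter.mpr ⟨Finset.mem_univ v, Relation.ReflTransGen.refl⟩⟩ p

/-! ### Infrastructure: reachability and BSCCs -/

section Infra

variable {V : Type} [Fintype V]

/-- The finset of vertices reachable from `x`. -/
noncomputable def reachF (G : BiddingGame V) (x : V) : Finset V :=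
  Finset.univ.filter (fun y => Relation.ReflTransGen G.E x y)

lemma mem_reachF {G : BiddingGame V} {x y : V} :
    y ∈ reachF G x ↔ Relation.ReflTransGen G.E x y := by
  simp [reachF]

lemma self_mem_reachF (G : BiddingGame V) (x : V) : x ∈ reachF G x :=
  mem_reachF.mpr Relation.ReflTransGen.refl

lemma reachF_nonempty (G : BiddingGame V) (x : V) : (reachF G x).Nonempty :=
  ⟨x, self_mem_reachF G x⟩

lemma bsccMaxIndex_def (G : BiddingGame V) (p : V → ℕ) (x : V) :
    bsccMaxIndex G p x = (reachF G x).sup' (reachF_nonempty G x) p := by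
  rfl

lemma reachF_mono {G : BiddingGame V} {x y : V}
    (h : Relation.ReflTransGen G.E x y) : reachF G y ⊆ reachF G x := by
  intro z hz
  exact mem_reachF.mpr (h.trans (mem_reachF.mp hz))

/-- Every vertex can reach a vertex in a BSCC. -/
lemma exists_reach_bscc (G : BiddingGame V) (x : V) :
    ∃ y, Relation.ReflTransGen G.E x y ∧ InBSCC G y := by
  obtain ⟨y, hy, hmin⟩ := Finset.exists_min_image (reachF G x)
    (fun z => (reachF G z).card) (reachF_nonempty G x)
  refine ⟨y, mem_reachF.mp hy, ?_⟩
  intro z hz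
  have hzx : z ∈ reachF G x := mem_reachF.mpr ((mem_reachF.mp hy).trans hz)
  have hsub : reachF G z ⊆ reachF G y := reachF_mono hz
  have : reachF G z = reachF G y :=
    Finset.eq_of_subset_of_card_le hsub (hmin z hzx)
  have : y ∈ reachF G z := this ▸ self_mem_reachF G y
  exact mem_reachF.mp this

lemma InBSCC.reachF_eq {G : BiddingGame V} {x y : V} (hx : InBSCC G x)
    (h : Relation.ReflTransGen G.E x y) : reachF G y = reachF G x := by
  apply Finset.Subset.antisymm (reachF_mono h)
  exact reachF_mono (hx y h)

lemma InBSCC.of_reach {G : BiddingGame V} {x y : V} (hx : InBSCC G x)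
    (h : Relation.ReflTransGen G.E x y) : InBSCC G y := by
  intro z hz
  exact ((hx z (h.trans hz)).trans h)

lemma InBSCC.bsccMaxIndex_eq {G : BiddingGame V} (p : V → ℕ) {x y : V}
    (hx : InBSCC G x) (h : Relation.ReflTransGen G.E x y) :
    bsccMaxIndex G p y = bsccMaxIndex G p x := by
  rw [bsccMaxIndex_def, bsccMaxIndex_def]
  exact Finset.sup'_congr _ (hx.reachF_eq h) (fun _ _ => rfl)

lemma mem_adj {G : BiddingGame V} {x y : V} : y ∈ G.adj x ↔ G.E x y := by
  simp [BiddingGame.adj]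

lemma adj_reach {G : BiddingGame V} {x y : V} (h : y ∈ G.adj x) :
    Relation.ReflTransGen G.E x y :=
  Relation.ReflTransGen.single (mem_adj.mp h)

/-- A forward-closed set containing `w` contains all vertices reachable from `w`. -/
lemma reach_mem_of_closed {G : BiddingGame V} {Z : Set V}
    (hcl : ∀ w ∈ Z, ∀ u, G.E w u → u ∈ Z) {w y : V} (hw : w ∈ Z)
    (h : Relation.ReflTransGen G.E w y) : y ∈ Z := by
  induction h with
  | refl => exact hw
  | tail _ h ih => exact hcl _ ih _ h

/-! ### Value iteration for Richman games with target sets -/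

/-- Value iteration: `A` is the attacker's (Player owning this function) target,
`Bs` is the opponent's target. -/
noncomputable def vit (G : BiddingGame V) (A Bs : Set V) : ℕ → V → ℝ
  | 0 => fun v => if v ∈ A then 0 else 1
  | (i+1) => fun v =>
      if v ∈ A then 0
      else if v ∈ Bs then 1
      else ((G.adj v).sup' (G.adj_nonempty v) (vit G A Bs i)
        + (G.adj v).inf' (G.adj_nonempty v) (vit G A Bs i)) / 2

variable {G : BiddingGame V} {A Bs : Set V}

lemma vit_nonneg : ∀ i v, 0 ≤ vit G A Bs i v := by
  intro i
  induction i with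
  | zero => intro v; simp only [vit]; split <;> norm_num
  | succ i ih =>
    intro v
    simp only [vit]
    split
    · norm_num
    · split
      · norm_num
      · have h1 : 0 ≤ (G.adj v).sup' (G.adj_nonempty v) (vit G A Bs i) := by
          obtain ⟨u, hu⟩ := G.adj_nonempty v
          exact le_trans (ih u) (Finset.le_sup' _ hu)
        have h2 : 0 ≤ (G.adj v).inf' (G.adj_nonempty v) (vit G A Bs i) :=
          Finset.le_inf' _ _ (fun u _ => ih u)
        linarith

lemma vit_le_one : ∀ i v, vit G A Bs i v ≤ 1 := by
  intro i
  induction i with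
  | zero => intro v; simp only [vit]; split <;> norm_num
  | succ i ih =>
    intro v
    simp only [vit]
    split
    · norm_num
    · split
      · norm_num
      · have h1 : (G.adj v).sup' (G.adj_nonempty v) (vit G A Bs i) ≤ 1 :=
          Finset.sup'_le _ _ (fun u _ => ih u)
        have h2 : (G.adj v).inf' (G.adj_nonempty v) (vit G A Bs i) ≤ 1 := by
          obtain ⟨u, hu⟩ := G.adj_nonempty v
          exact le_trans (Finset.inf'_le _ hu) (ih u)
        linarith

lemma vit_succ_apply (i : ℕ) (v : V) : vit G A Bs (i+1) v =
    if v ∈ A then 0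
    else if v ∈ Bs then 1
    else ((G.adj v).sup' (G.adj_nonempty v) (vit G A Bs i)
      + (G.adj v).inf' (G.adj_nonempty v) (vit G A Bs i)) / 2 := rfl

lemma vit_succ_le : ∀ i v, vit G A Bs (i+1) v ≤ vit G A Bs i v := by
  intro i
  induction i with
  | zero =>
    intro v
    by_cases hA : v ∈ A
    · simp [vit, hA]
    · have h1 : vit G A Bs 1 v ≤ 1 := vit_le_one 1 v
      have h0 : vit G A Bs 0 v = 1 := by simp [vit, hA]
      rw [h0]; exact h1
  | succ i ih =>
    intro v
    rw [vit_succ_apply (i+1), vit_succ_apply i]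
    split
    · exact le_refl _
    · split
      · exact le_refl _
      · have h1 : (G.adj v).sup' (G.adj_nonempty v) (vit G A Bs (i+1)) ≤
            (G.adj v).sup' (G.adj_nonempty v) (vit G A Bs i) :=
          Finset.sup'_le _ _ (fun u hu => le_trans (ih u) (Finset.le_sup' _ hu))
        have h2 : (G.adj v).inf' (G.adj_nonempty v) (vit G A Bs (i+1)) ≤
            (G.adj v).inf' (G.adj_nonempty v) (vit G A Bs i) :=
          Finset.le_inf' _ _ (fun u hu => le_trans (Finset.inf'_le _ hu) (ih u))
        linarith

lemma vit_antitone (v : V) : Antitone (fun i => vit G A Bs i v) :=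
  antitone_nat_of_succ_le (fun i => vit_succ_le i v)

/-- The limit of the value iteration. -/
noncomputable def vlim (G : BiddingGame V) (A Bs : Set V) (v : V) : ℝ :=
  ⨅ i, vit G A Bs i v

lemma vlim_nonneg (v : V) : 0 ≤ vlim G A Bs v :=
  le_ciInf (fun i => vit_nonneg i v)

lemma vlim_le_vit (i : ℕ) (v : V) : vlim G A Bs v ≤ vit G A Bs i v :=
  ciInf_le ⟨0, by rintro y ⟨j, rfl⟩; exact vit_nonneg j v⟩ i

lemma vlim_le_one (v : V) : vlim G A Bs v ≤ 1 :=
  (vlim_le_vit 0 v).trans (vit_le_one 0 v)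

lemma tendsto_vit (v : V) :
    Filter.Tendsto (fun i => vit G A Bs i v) Filter.atTop (nhds (vlim G A Bs v)) :=
  tendsto_atTop_ciInf (vit_antitone v) ⟨0, by rintro y ⟨j, rfl⟩; exact vit_nonneg j v⟩

lemma exists_vit_lt {v : V} {b : ℝ} (h : vlim G A Bs v < b) :
    ∃ i, vit G A Bs i v < b := by
  obtain ⟨i, hi⟩ := exists_lt_of_ciInf_lt h
  exact ⟨i, hi⟩

/-- Finite `sup'` commutes with limits. -/
lemma tendsto_finset_sup' {ι : Type*} {s : Finset ι} (hs : s.Nonempty)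
    (F : ℕ → ι → ℝ) (L : ι → ℝ)
    (h : ∀ u ∈ s, Filter.Tendsto (fun i => F i u) Filter.atTop (nhds (L u))) :
    Filter.Tendsto (fun i => s.sup' hs (F i)) Filter.atTop (nhds (s.sup' hs L)) := by
  induction hs using Finset.Nonempty.cons_induction with
  | singleton a => simpa using h a (by simp)
  | cons a s ha hs ih =>
    simp only [Finset.sup'_cons hs]
    exact Filter.Tendsto.max (h a (by simp))
      (ih (fun u hu => h u (by simp [hu])))

lemma tendsto_finset_inf' {ι : Type*} {s : Finset ι} (hs : s.Nonempty)
    (F : ℕ → ι → ℝ) (L : ι → ℝ)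
    (h : ∀ u ∈ s, Filter.Tendsto (fun i => F i u) Filter.atTop (nhds (L u))) :
    Filter.Tendsto (fun i => s.inf' hs (F i)) Filter.atTop (nhds (s.inf' hs L)) := by
  induction hs using Finset.Nonempty.cons_induction with
  | singleton a => simpa using h a (by simp)
  | cons a s ha hs ih =>
    simp only [Finset.inf'_cons hs]
    exact Filter.Tendsto.min (h a (by simp))
      (ih (fun u hu => h u (by simp [hu])))

/-- A fixed point of the Richman operator for targets `(A, Bs)`. -/
def IsFP (G : BiddingGame V) (A Bs : Set V) (f : V → ℝ) : Prop :=
  ∀ v, f v = if v ∈ A then 0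
    else if v ∈ Bs then 1
    else ((G.adj v).sup' (G.adj_nonempty v) f + (G.adj v).inf' (G.adj_nonempty v) f) / 2

lemma vlim_isFP : IsFP G A Bs (vlim G A Bs) := by
  intro v
  by_cases hA : v ∈ A
  · simp only [if_pos hA]
    have : ∀ i, vit G A Bs i v = 0 := by
      intro i; cases i <;> simp [vit, hA]
    simp [vlim, this]
  · by_cases hB : v ∈ Bs
    · simp only [if_neg hA, if_pos hB]
      have : ∀ i, vit G A Bs i v = 1 := by
        intro i; cases i <;> simp [vit, hA, hB]
      simp [vlim, this]
    · simp only [if_neg hA, if_neg hB]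
      have h1 : Filter.Tendsto (fun i => vit G A Bs (i+1) v) Filter.atTop
          (nhds (vlim G A Bs v)) :=
        (Filter.tendsto_add_atTop_iff_nat 1).mpr (tendsto_vit v) |>.congr (fun i => rfl)
      have h2 : Filter.Tendsto (fun i => vit G A Bs (i+1) v) Filter.atTop
          (nhds (((G.adj v).sup' (G.adj_nonempty v) (vlim G A Bs)
            + (G.adj v).inf' (G.adj_nonempty v) (vlim G A Bs)) / 2)) := by
        have hs := tendsto_finset_sup' (G.adj_nonempty v) (fun i => vit G A Bs i)
          (vlim G A Bs) (fun u _ => tendsto_vit u)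
        have hi := tendsto_finset_inf' (G.adj_nonempty v) (fun i => vit G A Bs i)
          (vlim G A Bs) (fun u _ => tendsto_vit u)
        have := (hs.add hi).div_const 2
        refine this.congr (fun i => ?_)
        simp [vit, hA, hB]
      exact tendsto_nhds_unique h1 h2

/-- Key uniqueness inequality for fixed points, assuming all BSCC vertices are targets. -/
lemma isFP_le (hcov : ∀ x, InBSCC G x → x ∈ A ∪ Bs)
    {f g : V → ℝ} (hf : IsFP G A Bs f) (hg : IsFP G A Bs g) : ∀ v, f v ≤ g v := by
  by_contra hcon
  push_neg at hcon
  obtain ⟨v₀, hv₀⟩ := hcon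
  have hVne : Nonempty V := ⟨v₀⟩
  obtain ⟨w₀, -, hw₀⟩ := Finset.exists_max_image Finset.univ (fun v => f v - g v)
    Finset.univ_nonempty
  set M : ℝ := f w₀ - g w₀ with hM
  have hMpos : 0 < M := lt_of_lt_of_le (by linarith) (hw₀ v₀ (Finset.mem_univ v₀))
  have hD : ∀ v, f v - g v ≤ M := fun v => hw₀ v (Finset.mem_univ v)
  set U : Finset V := Finset.univ.filter (fun v => f v - g v = M) with hU
  have hUne : U.Nonempty := ⟨w₀, by simp [hU, hM]⟩
  set c : ℝ := U.inf' hUne f with hc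
  obtain ⟨z₀, hz₀U, hz₀⟩ := Finset.exists_mem_eq_inf' hUne f
  set Z : Set V := {w | w ∈ U ∧ f w = c} with hZ
  have hZne : z₀ ∈ Z := ⟨hz₀U, hz₀.symm⟩
  -- Z is off-target and forward closed
  have hkey : ∀ w ∈ Z, (w ∉ A ∪ Bs) ∧ ∀ u, G.E w u → u ∈ Z := by
    intro w hw
    obtain ⟨hwU, hwc⟩ := hw
    have hwM : f w - g w = M := by simpa [hU] using hwU
    have hwT : w ∉ A ∪ Bs := by
      intro hT
      rcases hT with hT | hT
      · rw [hf w, hg w] at hwM; simp [hT] at hwM; linarith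
      · by_cases hA2 : w ∈ A
        · rw [hf w, hg w] at hwM; simp [hA2] at hwM; linarith
        · rw [hf w, hg w] at hwM; simp [hA2, hT] at hwM; linarith
    have hA2 : w ∉ A := fun h => hwT (Or.inl h)
    have hB2 : w ∉ Bs := fun h => hwT (Or.inr h)
    set Sf := (G.adj w).sup' (G.adj_nonempty w) f
    set If := (G.adj w).inf' (G.adj_nonempty w) f
    set Sg := (G.adj w).sup' (G.adj_nonempty w) g
    set Ig := (G.adj w).inf' (G.adj_nonempty w) g
    have hfw : f w = (Sf + If) / 2 := by rw [hf w]; simp [hA2, hB2, Sf, If]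
    have hgw : g w = (Sg + Ig) / 2 := by rw [hg w]; simp [hA2, hB2, Sg, Ig]
    have hSfSg : Sf ≤ Sg + M :=
      Finset.sup'_le _ _ (fun u hu => by
        have := hD u
        have := Finset.le_sup' g hu
        simp only [Sg]; linarith)
    have hIfIg : If ≤ Ig + M := by
      obtain ⟨u, hu, hueq⟩ := Finset.exists_mem_eq_inf' (G.adj_nonempty w) g
      have h1 : If ≤ f u := Finset.inf'_le _ hu
      have h2 := hD u
      simp only [If, Ig]; rw [hueq]; linarith
    have hsum : Sf + If = Sg + Ig + 2 * M := by
      have : f w = g w + M := by linarith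
      rw [hfw, hgw] at this; linarith
    have hSf : Sf = Sg + M := by linarith
    have hIf : If = Ig + M := by linarith
    -- the f-inf over adj w is attained at a vertex of U, hence ≥ c
    have hIfc : c ≤ If := by
      obtain ⟨u, hu, hueq⟩ := Finset.exists_mem_eq_inf' (G.adj_nonempty w) g
      have h1 : If ≤ f u := Finset.inf'_le f hu
      have hDu : f u - g u ≤ M := hD u
      have hgu : g u = Ig := hueq.symm
      have h2 : f u ≤ If := by rw [hIf]; linarith
      have hfu : f u = If := le_antisymm h2 h1
      have huU : u ∈ U := by
        simp only [hU, Finset.mem_filter, Finset.mem_univ, true_and]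
        rw [hfu, hgu, hIf]; ring
      have : c ≤ f u := Finset.inf'_le f huU
      rw [hfu] at this; exact this
    have hIfSf : If ≤ Sf := by
      obtain ⟨u, hu⟩ := G.adj_nonempty w
      exact le_trans (Finset.inf'_le f hu) (Finset.le_sup' f hu)
    have hcw : f w = c := hwc
    -- 2c = Sf + If, If ≥ c, Sf ≥ If  ⟹  Sf = If = c
    have h2c : Sf + If = 2 * c := by rw [hfw] at hcw; linarith
    have hSfc : Sf = c := by linarith
    have hIfc' : If = c := by linarith
    refine ⟨hwT, ?_⟩
    intro u hEu
    have huadj : u ∈ G.adj w := mem_adj.mpr hEu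
    have hfu1 : f u ≤ c := hSfc ▸ Finset.le_sup' f huadj
    have hfu2 : c ≤ f u := hIfc' ▸ Finset.inf'_le f huadj
    have hfu : f u = c := le_antisymm hfu1 hfu2
    have hgu1 : g u ≤ c - M := by
      have : g u ≤ Sg := Finset.le_sup' g huadj
      linarith [hSf, hSfc]
    have hgu2 : c - M ≤ g u := by
      have := hD u
      linarith
    have hgu : g u = c - M := le_antisymm hgu1 hgu2
    have huU : u ∈ U := by
      simp only [hU, Finset.mem_filter, Finset.mem_univ, true_and]
      rw [hfu, hgu]; ring
    exact ⟨huU, hfu⟩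
  -- Z forward closed, reaches a BSCC vertex, which is a target: contradiction
  obtain ⟨y, hy, hybscc⟩ := exists_reach_bscc G z₀
  have hyZ : y ∈ Z := reach_mem_of_closed (fun w hw u hu => (hkey w hw).2 u hu) hZne hy
  exact (hkey y hyZ).1 (hcov y hybscc)

lemma isFP_unique (hcov : ∀ x, InBSCC G x → x ∈ A ∪ Bs)
    {f g : V → ℝ} (hf : IsFP G A Bs f) (hg : IsFP G A Bs g) : f = g :=
  funext (fun v => le_antisymm (isFP_le hcov hf hg v) (isFP_le hcov hg hf v))

lemma sup'_const_sub {ι : Type*} {s : Finset ι} (hs : s.Nonempty) (c : ℝ) (f : ι → ℝ) :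
    s.sup' hs (fun u => c - f u) = c - s.inf' hs f := by
  apply le_antisymm
  · exact Finset.sup'_le _ _ (fun u hu => by linarith [Finset.inf'_le f hu])
  · obtain ⟨u, hu, hue⟩ := Finset.exists_mem_eq_inf' hs f
    rw [hue]
    exact Finset.le_sup' (fun u => c - f u) hu

lemma inf'_const_sub {ι : Type*} {s : Finset ι} (hs : s.Nonempty) (c : ℝ) (f : ι → ℝ) :
    s.inf' hs (fun u => c - f u) = c - s.sup' hs f := by
  apply le_antisymm
  · obtain ⟨u, hu, hue⟩ := Finset.exists_mem_eq_sup' hs f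
    rw [hue]
    exact Finset.inf'_le (fun u => c - f u) hu
  · exact Finset.le_inf' _ _ (fun u hu => by linarith [Finset.le_sup' f hu])

/-- The swapped limit is the complement of the original limit. -/
lemma vlim_swap (hdisj : ∀ x, x ∈ A → x ∉ Bs) (hcov : ∀ x, InBSCC G x → x ∈ A ∪ Bs) :
    ∀ v, vlim G Bs A v = 1 - vlim G A Bs v := by
  have hFP : IsFP G A Bs (fun v => 1 - vlim G Bs A v) := by
    intro v
    have h := vlim_isFP (G := G) (A := Bs) (Bs := A) v
    show 1 - vlim G Bs A v = _
    by_cases hA : v ∈ A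
    · have hB : v ∉ Bs := hdisj v hA
      rw [h]; simp [hA, hB]
    · by_cases hB : v ∈ Bs
      · rw [h]; simp [hA, hB]
      · rw [h]
        simp only [if_neg hA, if_neg hB, hA, hB, if_false]
        rw [sup'_const_sub, inf'_const_sub]
        ring
  have heq := isFP_unique hcov hFP (vlim_isFP (G := G) (A := A) (Bs := Bs))
  intro v
  have h2 := congrFun heq v
  linarith

end Infra
section Mech

variable {V : Type} [Fintype V]

lemma play_zero_cur (tb : TieBreak V) (f1 f2 : Strat V) (v0 : V) :
    (play tb f1 f2 v0 0).cur = v0 := rfl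

lemma play_zero_pay1 (tb : TieBreak V) (f1 f2 : Strat V) (v0 : V) :
    (play tb f1 f2 v0 0).pay1 = 0 := by
  simp [play, Hist.pay1]

lemma cur_extend (tb : TieBreak V) (f1 f2 : Strat V) (h : Hist V) :
    (extend tb f1 f2 h).cur =
      if (f2 h).1 < (f1 h).1 ∨ ((f1 h).1 = (f2 h).1 ∧ tb h = true) then (f1 h).2
      else (f2 h).2 := by
  unfold extend
  split <;> simp [Hist.cur]

lemma pay1_extend (tb : TieBreak V) (f1 f2 : Strat V) (h : Hist V) :
    (extend tb f1 f2 h).pay1 =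
      if (f2 h).1 < (f1 h).1 ∨ ((f1 h).1 = (f2 h).1 ∧ tb h = true) then h.pay1 + (f1 h).1
      else h.pay1 - (f2 h).1 := by
  unfold extend
  split <;> simp [Hist.pay1, sub_eq_add_neg]

/-- If Player 1 loses the bidding, Player 2's bid was at least Player 1's. -/
lemma lose1_ge (tb : TieBreak V) (f1 f2 : Strat V) (h : Hist V)
    (hn : ¬((f2 h).1 < (f1 h).1 ∨ ((f1 h).1 = (f2 h).1 ∧ tb h = true))) :
    (f1 h).1 ≤ (f2 h).1 := by
  push_neg at hn
  exact hn.1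

/-- If Player 1 wins the bidding, his bid was at least Player 2's. -/
lemma win1_ge (tb : TieBreak V) (f1 f2 : Strat V) (h : Hist V)
    (hw : (f2 h).1 < (f1 h).1 ∨ ((f1 h).1 = (f2 h).1 ∧ tb h = true)) :
    (f2 h).1 ≤ (f1 h).1 := by
  rcases hw with hw | hw
  · exact le_of_lt hw
  · exact le_of_eq hw.1.symm

noncomputable def pickM (p : V → ℕ) (s : Finset V) (hs : s.Nonempty) : V :=
  (Finset.exists_mem_eq_sup' hs p).choose

lemma pickM_mem (p : V → ℕ) (s : Finset V) (hs : s.Nonempty) : pickM p s hs ∈ s :=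
  (Finset.exists_mem_eq_sup' hs p).choose_spec.1

lemma pickM_val (p : V → ℕ) (s : Finset V) (hs : s.Nonempty) :
    s.sup' hs p = p (pickM p s hs) :=
  (Finset.exists_mem_eq_sup' hs p).choose_spec.2

lemma pickM_congr (p : V → ℕ) {s t : Finset V} (hs : s.Nonempty) (ht : t.Nonempty)
    (h : s = t) : pickM p s hs = pickM p t ht := by subst h; rfl

/-- A vertex of maximal parity index among those reachable from `x`. -/
noncomputable def mvert (G : BiddingGame V) (p : V → ℕ) (x : V) : V :=
  pickM p (reachF G x) (reachF_nonempty G x)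

lemma mvert_mem (G : BiddingGame V) (p : V → ℕ) (x : V) :
    mvert G p x ∈ reachF G x := pickM_mem _ _ _

lemma mvert_p (G : BiddingGame V) (p : V → ℕ) (x : V) :
    p (mvert G p x) = bsccMaxIndex G p x :=
  (bsccMaxIndex_def G p x ▸ pickM_val p (reachF G x) (reachF_nonempty G x)).symm

lemma mvert_congr (G : BiddingGame V) (p : V → ℕ) {x y : V}
    (h : reachF G x = reachF G y) : mvert G p x = mvert G p y :=
  pickM_congr p _ _ h

/-- A successor of `x` minimizing `W`. -/
noncomputable def amin (G : BiddingGame V) (W : V → ℝ) (x : V) : V :=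
  (Finset.exists_mem_eq_inf' (G.adj_nonempty x) W).choose

lemma amin_mem (G : BiddingGame V) (W : V → ℝ) (x : V) : amin G W x ∈ G.adj x :=
  (Finset.exists_mem_eq_inf' (G.adj_nonempty x) W).choose_spec.1

lemma amin_val (G : BiddingGame V) (W : V → ℝ) (x : V) :
    (G.adj x).inf' (G.adj_nonempty x) W = W (amin G W x) :=
  (Finset.exists_mem_eq_inf' (G.adj_nonempty x) W).choose_spec.2

lemma adj_inf'_le_sup' (G : BiddingGame V) (W : V → ℝ) (x : V) :
    (G.adj x).inf' (G.adj_nonempty x) W ≤ (G.adj x).sup' (G.adj_nonempty x) W := by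
  obtain ⟨u, hu⟩ := G.adj_nonempty x
  exact le_trans (Finset.inf'_le W hu) (Finset.le_sup' W hu)

/-- The optimal bid with respect to a value function `W`. -/
noncomputable def gbid (G : BiddingGame V) (W : V → ℝ) (x : V) : ℝ :=
  ((G.adj x).sup' (G.adj_nonempty x) W - (G.adj x).inf' (G.adj_nonempty x) W) / 2

lemma gbid_nonneg (G : BiddingGame V) (W : V → ℝ) (x : V) : 0 ≤ gbid G W x := by
  have := adj_inf'_le_sup' G W x
  unfold gbid; linarith

/-- The raw action of the attacker of target set `A` (opponent target `Bs`) at vertex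
`x` with budget `β`. -/
noncomputable def gact (G : BiddingGame V) (p : V → ℕ) (A Bs : Set V) (x : V) (β : ℝ) :
    ℝ × V :=
  if x ∈ A then
    (if x = mvert G p x then (0, (G.adj_nonempty x).choose)
     else if hex : ∃ i, vit G {mvert G p x} ∅ i x < β then
       (gbid G (vit G {mvert G p x} ∅ (Nat.find hex - 1)) x,
        amin G (vit G {mvert G p x} ∅ (Nat.find hex - 1)) x)
     else (0, (G.adj_nonempty x).choose))
  else
    (if hex : ∃ i, vit G A Bs i x < β then
       (gbid G (vit G A Bs (Nat.find hex - 1)) x, amin G (vit G A Bs (Nat.find hex - 1)) x)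
     else (0, (G.adj_nonempty x).choose))

lemma gact_snd_adj (G : BiddingGame V) (p : V → ℕ) (A Bs : Set V) (x : V) (β : ℝ) :
    (gact G p A Bs x β).2 ∈ G.adj x := by
  unfold gact
  split
  · split
    · exact (G.adj_nonempty x).choose_spec
    · split
      · exact amin_mem _ _ _
      · exact (G.adj_nonempty x).choose_spec
  · split
    · exact amin_mem _ _ _
    · exact (G.adj_nonempty x).choose_spec

/-- The master strategy for Player 1 with initial budget `B`. -/
noncomputable def strat1 (G : BiddingGame V) (p : V → ℕ) (A Bs : Set V) (B : ℝ) :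
    Strat V := fun h =>
  (max 0 (min (gact G p A Bs h.cur (B - h.pay1)).1 (B - h.pay1)),
   (gact G p A Bs h.cur (B - h.pay1)).2)

/-- The master strategy for Player 2 with initial budget `B`. -/
noncomputable def strat2 (G : BiddingGame V) (p : V → ℕ) (A Bs : Set V) (B : ℝ) :
    Strat V := fun h =>
  (max 0 (min (gact G p A Bs h.cur (B - h.pay2)).1 (B - h.pay2)),
   (gact G p A Bs h.cur (B - h.pay2)).2)

variable {G : BiddingGame V} {p : V → ℕ} {A Bs : Set V} {B : ℝ}

/-- Budget nonnegativity along any play for the clamped strategy. -/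
lemma strat1_budget_nonneg (hB : 0 ≤ B) (tb : TieBreak V) (f2 : Strat V) (v0 : V) :
    ∀ n, 0 ≤ B - (play tb (strat1 G p A Bs B) f2 v0 n).pay1 := by
  intro n
  induction n with
  | zero => rw [play_zero_pay1]; simpa using hB
  | succ n ih =>
    set h := play tb (strat1 G p A Bs B) f2 v0 n with hh
    show 0 ≤ B - (extend tb (strat1 G p A Bs B) f2 h).pay1
    rw [pay1_extend]
    split
    · have hc : (strat1 G p A Bs B h).1 ≤ B - h.pay1 :=
        max_le ih (min_le_right _ _)
      simp only [strat1] at hc ⊢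
      linarith
    · rename_i hn
      have h1 : (strat1 G p A Bs B h).1 ≤ (f2 h).1 := lose1_ge tb _ f2 h hn
      have h0 : (0:ℝ) ≤ (strat1 G p A Bs B h).1 := le_max_left _ _
      linarith

lemma strat1_legal (hB : 0 ≤ B) : Legal1 G (strat1 G p A Bs B) B := by
  intro tb f2 v0 n
  refine ⟨le_max_left _ _, ?_, ?_⟩
  · exact max_le (strat1_budget_nonneg hB tb f2 v0 n) (min_le_right _ _)
  · exact mem_adj.mp (gact_snd_adj G p A Bs _ _)

lemma strat2_budget_nonneg (hB : 0 ≤ B) (tb : TieBreak V) (f1 : Strat V) (v0 : V) :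
    ∀ n, 0 ≤ B - (play tb f1 (strat2 G p A Bs B) v0 n).pay2 := by
  intro n
  induction n with
  | zero =>
    have h0 : (play tb f1 (strat2 G p A Bs B) v0 0).pay2 = 0 := by
      simp [Hist.pay2, play_zero_pay1]
    rw [h0]; simpa using hB
  | succ n ih =>
    set h := play tb f1 (strat2 G p A Bs B) v0 n with hh
    show 0 ≤ B - (extend tb f1 (strat2 G p A Bs B) h).pay2
    simp only [Hist.pay2] at ih ⊢
    rw [pay1_extend]
    split
    · rename_i hw
      have h1 : (strat2 G p A Bs B h).1 ≤ (f1 h).1 := win1_ge tb f1 _ h hw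
      have h0 : (0:ℝ) ≤ (strat2 G p A Bs B h).1 := le_max_left _ _
      linarith
    · have hc : (strat2 G p A Bs B h).1 ≤ B - h.pay2 :=
        max_le ih (min_le_right _ _)
      simp only [strat2, Hist.pay2] at hc ⊢
      linarith

lemma strat2_legal (hB : 0 ≤ B) : Legal2 G (strat2 G p A Bs B) B := by
  intro tb f1 v0 n
  refine ⟨le_max_left _ _, ?_, ?_⟩
  · exact max_le (strat2_budget_nonneg hB tb f1 v0 n) (min_le_right _ _)
  · exact mem_adj.mp (gact_snd_adj G p A Bs _ _)

/-- Against a legal opponent, Player 1's budget never exceeds 1. -/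
lemma budget1_le_one {f1 f2 : Strat V} {tb : TieBreak V} {v0 : V}
    (hf2 : Legal2 G f2 (1 - B)) (n : ℕ) :
    B - (play tb f1 f2 v0 n).pay1 ≤ 1 := by
  obtain ⟨h0, h1, -⟩ := hf2 tb f1 v0 n
  simp only [Hist.pay2] at h1
  linarith

/-- Against a legal opponent, Player 2's budget never exceeds 1. -/
lemma budget2_le_one {f1 f2 : Strat V} {tb : TieBreak V} {v0 : V}
    (hf1 : Legal1 G f1 (1 - B)) (n : ℕ) :
    B - (play tb f1 f2 v0 n).pay2 ≤ 1 := by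
  obtain ⟨h0, h1, -⟩ := hf1 tb f2 v0 n
  simp only [Hist.pay2]
  linarith

end Mech
section Values

variable {V : Type} [Fintype V] {G : BiddingGame V} {A Bs : Set V}

lemma vit_zero_of_mem_A {x : V} (hA : x ∈ A) (k : ℕ) : vit G A Bs k x = 0 := by
  cases k <;> simp [vit, hA]

lemma vit_one_of_mem_Bs {x : V} (hA : x ∉ A) (hB : x ∈ Bs) (k : ℕ) :
    vit G A Bs k x = 1 := by
  cases k <;> simp [vit, hA, hB]

lemma vit_zero_eq_one {x : V} (hA : x ∉ A) : vit G A Bs 0 x = 1 := by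
  simp [vit, hA]

lemma vlim_zero_of_mem_A {x : V} (hA : x ∈ A) : vlim G A Bs x = 0 := by
  have h := vlim_isFP (G := G) (A := A) (Bs := Bs) x
  rw [h, if_pos hA]

/-- On a BSCC, the limit value for reaching the maximal-index vertex is zero. -/
lemma vlim_buchi_zero (p : V → ℕ) {x : V} (hx : InBSCC G x) {y : V}
    (hy : y ∈ reachF G x) : vlim G ({mvert G p x} : Set V) ∅ y = 0 := by
  set m := mvert G p x with hm
  obtain ⟨w₀, hw₀mem, hw₀⟩ := Finset.exists_mem_eq_sup' (reachF_nonempty G x)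
    (vlim G ({m} : Set V) ∅)
  have hfm : vlim G ({m} : Set V) ∅ m = 0 := vlim_zero_of_mem_A rfl
  have hcle : (reachF G x).sup' (reachF_nonempty G x) (vlim G ({m} : Set V) ∅) ≤ 0 := by
    by_contra hc
    push_neg at hc
    set c : ℝ := (reachF G x).sup' (reachF_nonempty G x) (vlim G ({m} : Set V) ∅) with hcd
    set Z : Set V := {w | w ∈ reachF G x ∧ vlim G ({m} : Set V) ∅ w = c} with hZd
    have hZcl : ∀ w ∈ Z, ∀ u, G.E w u → u ∈ Z := by
      intro w hw u hEu
      obtain ⟨hwr, hwc⟩ := hw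
      have hwm : w ∉ ({m} : Set V) := by
        intro hwm
        rw [Set.mem_singleton_iff] at hwm
        rw [hwm, hfm] at hwc
        exact absurd hwc.symm (ne_of_gt hc)
      have hfp := vlim_isFP (G := G) (A := ({m} : Set V)) (Bs := (∅ : Set V)) w
      rw [if_neg hwm, if_neg (Set.notMem_empty w)] at hfp
      have hadj_reach : ∀ u' ∈ G.adj w, u' ∈ reachF G x := by
        intro u' hu'
        exact mem_reachF.mpr ((mem_reachF.mp hwr).trans (adj_reach hu'))
      have hSle : (G.adj w).sup' (G.adj_nonempty w) (vlim G ({m} : Set V) ∅) ≤ c := by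
        apply Finset.sup'_le
        intro u' hu'
        rw [hcd]
        exact Finset.le_sup' (vlim G ({m} : Set V) ∅) (hadj_reach u' hu')
      have hIge : c ≤ (G.adj w).inf' (G.adj_nonempty w) (vlim G ({m} : Set V) ∅) := by
        rw [hfp] at hwc
        linarith
      have hfu : vlim G ({m} : Set V) ∅ u = c := by
        have huadj : u ∈ G.adj w := mem_adj.mpr hEu
        have h1 : vlim G ({m} : Set V) ∅ u ≤ c := by
          rw [hcd]
          exact Finset.le_sup' (vlim G ({m} : Set V) ∅) (hadj_reach u huadj)
        have h2 : c ≤ vlim G ({m} : Set V) ∅ u :=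
          le_trans hIge (Finset.inf'_le (vlim G ({m} : Set V) ∅) huadj)
        exact le_antisymm h1 h2
      exact ⟨hadj_reach u (mem_adj.mpr hEu), hfu⟩
    have hw₀Z : w₀ ∈ Z := ⟨hw₀mem, hw₀.symm⟩
    have hmZ : m ∈ Z := by
      have hreach : Relation.ReflTransGen G.E w₀ m := by
        have hre : reachF G w₀ = reachF G x := hx.reachF_eq (mem_reachF.mp hw₀mem)
        exact mem_reachF.mp (hre ▸ mvert_mem G p x)
      exact reach_mem_of_closed hZcl hw₀Z hreach
    obtain ⟨-, hmc⟩ := hmZ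
    rw [hmc] at hfm
    exact absurd hfm (ne_of_gt hc)
  have h1 : vlim G ({m} : Set V) ∅ y ≤ 0 :=
    le_trans (Finset.le_sup' (vlim G ({m} : Set V) ∅) hy) hcle
  exact le_antisymm h1 (vlim_nonneg y)

end Values

/-! ### The target sets of the parity game -/

/-- Union of BSCCs with odd maximal index. -/
def Rp {V : Type} [Fintype V] (G : BiddingGame V) (p : V → ℕ) : Set V :=
  {x | InBSCC G x ∧ Odd (bsccMaxIndex G p x)}

/-- Union of BSCCs with even maximal index. -/
def Sp {V : Type} [Fintype V] (G : BiddingGame V) (p : V → ℕ) : Set V :=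
  {x | InBSCC G x ∧ ¬ Odd (bsccMaxIndex G p x)}

section TargetSets

variable {V : Type} [Fintype V] {G : BiddingGame V} {p : V → ℕ}

lemma Rp_disj_Sp : ∀ x, x ∈ Rp G p → x ∉ Sp G p := by
  intro x hx hx'
  exact hx'.2 hx.2

lemma bscc_cover : ∀ x, InBSCC G x → x ∈ Rp G p ∪ Sp G p := by
  intro x hx
  by_cases h : Odd (bsccMaxIndex G p x)
  · exact Or.inl ⟨hx, h⟩
  · exact Or.inr ⟨hx, h⟩

lemma Rp_closed {x y : V} (hx : x ∈ Rp G p) (hE : G.E x y) : y ∈ Rp G p := by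
  obtain ⟨hb, ho⟩ := hx
  have hr : Relation.ReflTransGen G.E x y := Relation.ReflTransGen.single hE
  exact ⟨hb.of_reach hr, by rwa [hb.bsccMaxIndex_eq p hr]⟩

lemma Sp_closed {x y : V} (hx : x ∈ Sp G p) (hE : G.E x y) : y ∈ Sp G p := by
  obtain ⟨hb, ho⟩ := hx
  have hr : Relation.ReflTransGen G.E x y := Relation.ReflTransGen.single hE
  exact ⟨hb.of_reach hr, by rwa [hb.bsccMaxIndex_eq p hr]⟩

lemma vlim_swap_RpSp (v : V) : vlim G (Sp G p) (Rp G p) v = 1 - vlim G (Rp G p) (Sp G p) v :=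
  vlim_swap Rp_disj_Sp bscc_cover v

end TargetSets
section Master1

variable {V : Type} [Fintype V]

lemma master1 (G : BiddingGame V) (p : V → ℕ) {B : ℝ} (v : V)
    (hB : vlim G (Rp G p) (Sp G p) v < B) (tb : TieBreak V) :
    ∃ f1 : Strat V, Legal1 G f1 B ∧ ∀ f2 : Strat V, Legal2 G f2 (1 - B) →
      Win1RichmanSet tb f1 f2 v (Rp G p) (Sp G p) ∧ Win1Parity p tb f1 f2 v := by
  have hB0 : 0 ≤ B := le_of_lt (lt_of_le_of_lt (vlim_nonneg v) hB)
  refine ⟨strat1 G p (Rp G p) (Sp G p) B, strat1_legal hB0, ?_⟩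
  set f1 : Strat V := strat1 G p (Rp G p) (Sp G p) B with hf1d
  intro f2 hf2
  have hge0 : ∀ n, 0 ≤ B - (play tb f1 f2 v n).pay1 := strat1_budget_nonneg hB0 tb f2 v
  have hle1 : ∀ n, B - (play tb f1 f2 v n).pay1 ≤ 1 := fun n => budget1_le_one hf2 n
  -- each step follows an edge
  have hadj : ∀ n, visit tb f1 f2 v (n+1) ∈ G.adj (visit tb f1 f2 v n) := by
    intro n
    show (play tb f1 f2 v (n+1)).cur ∈ _
    have hpl : play tb f1 f2 v (n+1) = extend tb f1 f2 (play tb f1 f2 v n) := rfl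
    rw [hpl, cur_extend]
    split
    · exact gact_snd_adj G p _ _ _ _
    · exact mem_adj.mpr (hf2 tb f1 v n).2.2
  -- the core bidding step
  have hstep : ∀ (n : ℕ) (W : V → ℝ), (∀ u, 0 ≤ W u) →
      (f1 (play tb f1 f2 v n)).1
        = max 0 (min (gbid G W (visit tb f1 f2 v n)) (B - (play tb f1 f2 v n).pay1)) →
      (f1 (play tb f1 f2 v n)).2 = amin G W (visit tb f1 f2 v n) →
      ((G.adj (visit tb f1 f2 v n)).sup' (G.adj_nonempty _) W
        + (G.adj (visit tb f1 f2 v n)).inf' (G.adj_nonempty _) W) / 2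
        < B - (play tb f1 f2 v n).pay1 →
      W (visit tb f1 f2 v (n+1)) < B - (play tb f1 f2 v (n+1)).pay1 := by
    intro n W hW0 hb1 hb2 hβn
    set h := play tb f1 f2 v n with hh
    set x := visit tb f1 f2 v n with hxd
    set Sw := (G.adj x).sup' (G.adj_nonempty x) W with hSw
    set Iw := (G.adj x).inf' (G.adj_nonempty x) W with hIw
    have hIw0 : 0 ≤ Iw := Finset.le_inf' _ _ (fun u _ => hW0 u)
    have hIS : Iw ≤ Sw := adj_inf'_le_sup' G W x
    have hbid : (f1 h).1 = (Sw - Iw)/2 := by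
      rw [hb1]
      have hg : gbid G W x = (Sw - Iw)/2 := rfl
      rw [hg, min_eq_left (by linarith), max_eq_right (by linarith)]
    have hplay : play tb f1 f2 v (n+1) = extend tb f1 f2 h := rfl
    show W (play tb f1 f2 v (n+1)).cur < B - (play tb f1 f2 v (n+1)).pay1
    rw [hplay, cur_extend, pay1_extend]
    by_cases hw : ((f2 h).1 < (f1 h).1 ∨ ((f1 h).1 = (f2 h).1 ∧ tb h = true))
    · rw [if_pos hw, if_pos hw, hb2]
      have hav : W (amin G W x) = Iw := (amin_val G W x).symm
      rw [hav, hbid]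
      linarith
    · rw [if_neg hw, if_neg hw]
      have hl : (f1 h).1 ≤ (f2 h).1 := lose1_ge tb f1 f2 h hw
      rw [hbid] at hl
      have hmem : (f2 h).2 ∈ G.adj x := mem_adj.mpr (hf2 tb f1 v n).2.2
      have hWle : W ((f2 h).2) ≤ Sw := Finset.le_sup' W hmem
      linarith
  -- mode: outside Rp, attack Rp avoiding Sp
  have hout : ∀ (n : ℕ) (hx : visit tb f1 f2 v n ∉ Rp G p)
      (hex : ∃ i, vit G (Rp G p) (Sp G p) i (visit tb f1 f2 v n)
        < B - (play tb f1 f2 v n).pay1),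
      f1 (play tb f1 f2 v n)
        = (max 0 (min (gbid G (vit G (Rp G p) (Sp G p) (Nat.find hex - 1))
              (visit tb f1 f2 v n)) (B - (play tb f1 f2 v n).pay1)),
           amin G (vit G (Rp G p) (Sp G p) (Nat.find hex - 1)) (visit tb f1 f2 v n)) := by
    intro n hx hex
    have hg : gact G p (Rp G p) (Sp G p) (visit tb f1 f2 v n)
        (B - (play tb f1 f2 v n).pay1)
        = (gbid G (vit G (Rp G p) (Sp G p) (Nat.find hex - 1)) (visit tb f1 f2 v n),
           amin G (vit G (Rp G p) (Sp G p) (Nat.find hex - 1)) (visit tb f1 f2 v n)) := by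
      unfold gact
      rw [if_neg hx, dif_pos hex]
    show (max 0 (min (gact G p (Rp G p) (Sp G p) (visit tb f1 f2 v n)
        (B - (play tb f1 f2 v n).pay1)).1 (B - (play tb f1 f2 v n).pay1)),
        (gact G p (Rp G p) (Sp G p) (visit tb f1 f2 v n)
        (B - (play tb f1 f2 v n).pay1)).2) = _
    rw [hg]
  -- mode: inside Rp, at the maximal vertex
  have hinm : ∀ (n : ℕ), visit tb f1 f2 v n ∈ Rp G p →
      visit tb f1 f2 v n = mvert G p (visit tb f1 f2 v n) →
      (f1 (play tb f1 f2 v n)).1 = 0 := by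
    intro n hx heq
    have hg : (gact G p (Rp G p) (Sp G p) (visit tb f1 f2 v n)
        (B - (play tb f1 f2 v n).pay1)).1 = 0 := by
      unfold gact
      rw [if_pos hx, if_pos heq]
    show max 0 (min (gact G p (Rp G p) (Sp G p) (visit tb f1 f2 v n)
        (B - (play tb f1 f2 v n).pay1)).1 (B - (play tb f1 f2 v n).pay1)) = 0
    rw [hg, min_eq_left (hge0 n), max_self]
  -- mode: inside Rp, attacking the maximal vertex
  have hinatk : ∀ (n : ℕ) (hx : visit tb f1 f2 v n ∈ Rp G p)
      (hne : ¬(visit tb f1 f2 v n = mvert G p (visit tb f1 f2 v n)))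
      (hex : ∃ i, vit G ({mvert G p (visit tb f1 f2 v n)} : Set V) ∅ i
        (visit tb f1 f2 v n) < B - (play tb f1 f2 v n).pay1),
      f1 (play tb f1 f2 v n)
        = (max 0 (min (gbid G (vit G ({mvert G p (visit tb f1 f2 v n)} : Set V) ∅
              (Nat.find hex - 1)) (visit tb f1 f2 v n)) (B - (play tb f1 f2 v n).pay1)),
           amin G (vit G ({mvert G p (visit tb f1 f2 v n)} : Set V) ∅ (Nat.find hex - 1))
             (visit tb f1 f2 v n)) := by
    intro n hx hne hex
    have hg : gact G p (Rp G p) (Sp G p) (visit tb f1 f2 v n)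
        (B - (play tb f1 f2 v n).pay1)
        = (gbid G (vit G ({mvert G p (visit tb f1 f2 v n)} : Set V) ∅ (Nat.find hex - 1))
            (visit tb f1 f2 v n),
           amin G (vit G ({mvert G p (visit tb f1 f2 v n)} : Set V) ∅ (Nat.find hex - 1))
            (visit tb f1 f2 v n)) := by
      unfold gact
      rw [if_pos hx, if_neg hne, dif_pos hex]
    show (max 0 (min (gact G p (Rp G p) (Sp G p) (visit tb f1 f2 v n)
        (B - (play tb f1 f2 v n).pay1)).1 (B - (play tb f1 f2 v n).pay1)),
        (gact G p (Rp G p) (Sp G p) (visit tb f1 f2 v n)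
        (B - (play tb f1 f2 v n).pay1)).2) = _
    rw [hg]
  -- Phase 1: reach Rp while avoiding Sp
  have reach1 : ∀ (k n : ℕ),
      vit G (Rp G p) (Sp G p) k (visit tb f1 f2 v n) < B - (play tb f1 f2 v n).pay1 →
      ∃ j, j ≤ k ∧ visit tb f1 f2 v (n+j) ∈ Rp G p ∧
        0 < B - (play tb f1 f2 v (n+j)).pay1 ∧
        ∀ j' < j, visit tb f1 f2 v (n+j') ∉ Rp G p ∧ visit tb f1 f2 v (n+j') ∉ Sp G p := by
    intro k
    induction k using Nat.strong_induction_on with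
    | _ k IH =>
    intro n hk
    by_cases hxR : visit tb f1 f2 v n ∈ Rp G p
    · refine ⟨0, Nat.zero_le k, by simpa using hxR, ?_,
        fun j' hj' => absurd hj' (Nat.not_lt_zero j')⟩
      have h0 := vit_nonneg (G := G) (A := Rp G p) (Bs := Sp G p) k (visit tb f1 f2 v n)
      simpa using lt_of_le_of_lt h0 hk
    · have hxS : visit tb f1 f2 v n ∉ Sp G p := by
        intro hs
        rw [vit_one_of_mem_Bs hxR hs k] at hk
        exact absurd hk (not_lt.mpr (hle1 n))
      have hex : ∃ i, vit G (Rp G p) (Sp G p) i (visit tb f1 f2 v n)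
          < B - (play tb f1 f2 v n).pay1 := ⟨k, hk⟩
      have hk₀le : Nat.find hex ≤ k := Nat.find_min' hex hk
      have hk₀spec := Nat.find_spec hex
      have hk₀pos : Nat.find hex ≠ 0 := by
        intro h0
        rw [h0, vit_zero_eq_one hxR] at hk₀spec
        exact absurd hk₀spec (not_lt.mpr (hle1 n))
      obtain ⟨k₁, hk₁⟩ : ∃ k₁, Nat.find hex = k₁ + 1 :=
        ⟨Nat.find hex - 1, (Nat.succ_pred_eq_of_pos (Nat.pos_of_ne_zero hk₀pos)).symm⟩
      have hmode := hout n hxR hex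
      have hsub : Nat.find hex - 1 = k₁ := by omega
      rw [hsub] at hmode
      have havg : ((G.adj (visit tb f1 f2 v n)).sup' (G.adj_nonempty _)
            (vit G (Rp G p) (Sp G p) k₁)
          + (G.adj (visit tb f1 f2 v n)).inf' (G.adj_nonempty _)
            (vit G (Rp G p) (Sp G p) k₁)) / 2
          < B - (play tb f1 f2 v n).pay1 := by
        rw [hk₁, vit_succ_apply, if_neg hxR, if_neg hxS] at hk₀spec
        exact hk₀spec
      have hW := hstep n (vit G (Rp G p) (Sp G p) k₁) (fun u => vit_nonneg k₁ u)
        (by rw [hmode]) (by rw [hmode]) havg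
      obtain ⟨j, hjle, hjR, hjpos, hjpre⟩ := IH k₁ (by omega) (n+1) hW
      refine ⟨j+1, by omega, ?_, ?_, ?_⟩
      · rw [show n + (j+1) = (n+1) + j from by omega]; exact hjR
      · rw [show n + (j+1) = (n+1) + j from by omega]; exact hjpos
      · intro j' hj'
        cases j' with
        | zero => simpa using ⟨hxR, hxS⟩
        | succ j'' =>
          rw [show n + (j''+1) = (n+1) + j'' from by omega]
          exact hjpre j'' (by omega)
  -- Phase 2 invariant: stay in the BSCC with positive budget
  have hinv : ∀ (n₁ : ℕ), visit tb f1 f2 v n₁ ∈ Rp G p →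
      0 < B - (play tb f1 f2 v n₁).pay1 →
      ∀ n, n₁ ≤ n → visit tb f1 f2 v n ∈ Rp G p ∧
        reachF G (visit tb f1 f2 v n) = reachF G (visit tb f1 f2 v n₁) ∧
        0 < B - (play tb f1 f2 v n).pay1 := by
    intro n₁ hR hpos n hn
    induction n, hn using Nat.le_induction with
    | base => exact ⟨hR, rfl, hpos⟩
    | succ n hn ih =>
      obtain ⟨ihR, ihreach, ihpos⟩ := ih
      have hEdge : G.E (visit tb f1 f2 v n) (visit tb f1 f2 v (n+1)) :=
        mem_adj.mp (hadj n)
      have hbscc : InBSCC G (visit tb f1 f2 v n) := ihR.1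
      have hRnext : visit tb f1 f2 v (n+1) ∈ Rp G p := Rp_closed ihR hEdge
      have hreach : reachF G (visit tb f1 f2 v (n+1)) = reachF G (visit tb f1 f2 v n₁) := by
        rw [hbscc.reachF_eq (Relation.ReflTransGen.single hEdge)]
        exact ihreach
      refine ⟨hRnext, hreach, ?_⟩
      by_cases hm : visit tb f1 f2 v n = mvert G p (visit tb f1 f2 v n)
      · have hb0 : (f1 (play tb f1 f2 v n)).1 = 0 := hinm n ihR hm
        have hplay : play tb f1 f2 v (n+1) = extend tb f1 f2 (play tb f1 f2 v n) := rfl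
        show 0 < B - (play tb f1 f2 v (n+1)).pay1
        rw [hplay, pay1_extend]
        by_cases hw : ((f2 (play tb f1 f2 v n)).1 < (f1 (play tb f1 f2 v n)).1 ∨
            ((f1 (play tb f1 f2 v n)).1 = (f2 (play tb f1 f2 v n)).1 ∧
              tb (play tb f1 f2 v n) = true))
        · rw [if_pos hw, hb0]; linarith
        · rw [if_neg hw]
          have h2 : (f1 (play tb f1 f2 v n)).1 ≤ (f2 (play tb f1 f2 v n)).1 :=
            lose1_ge tb f1 f2 _ hw
          rw [hb0] at h2
          linarith
      · have hvz : vlim G ({mvert G p (visit tb f1 f2 v n)} : Set V) ∅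
            (visit tb f1 f2 v n) = 0 :=
          vlim_buchi_zero p hbscc (self_mem_reachF G _)
        have hex : ∃ i, vit G ({mvert G p (visit tb f1 f2 v n)} : Set V) ∅ i
            (visit tb f1 f2 v n) < B - (play tb f1 f2 v n).pay1 := by
          apply exists_vit_lt
          rw [hvz]; exact ihpos
        have hk₀spec := Nat.find_spec hex
        have hxnm : visit tb f1 f2 v n ∉ ({mvert G p (visit tb f1 f2 v n)} : Set V) := by
          simpa [Set.mem_singleton_iff] using hm
        have hk₀pos : Nat.find hex ≠ 0 := by
          intro h0
          rw [h0, vit_zero_eq_one hxnm] at hk₀spec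
          exact absurd hk₀spec (not_lt.mpr (hle1 n))
        obtain ⟨k₁, hk₁⟩ : ∃ k₁, Nat.find hex = k₁ + 1 :=
          ⟨Nat.find hex - 1, (Nat.succ_pred_eq_of_pos (Nat.pos_of_ne_zero hk₀pos)).symm⟩
        have hmode := hinatk n ihR hm hex
        have hsub : Nat.find hex - 1 = k₁ := by omega
        rw [hsub] at hmode
        have havg : ((G.adj (visit tb f1 f2 v n)).sup' (G.adj_nonempty _)
              (vit G ({mvert G p (visit tb f1 f2 v n)} : Set V) ∅ k₁)
            + (G.adj (visit tb f1 f2 v n)).inf' (G.adj_nonempty _)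
              (vit G ({mvert G p (visit tb f1 f2 v n)} : Set V) ∅ k₁)) / 2
            < B - (play tb f1 f2 v n).pay1 := by
          rw [hk₁, vit_succ_apply, if_neg hxnm, if_neg (Set.notMem_empty _)] at hk₀spec
          exact hk₀spec
        have hW := hstep n (vit G ({mvert G p (visit tb f1 f2 v n)} : Set V) ∅ k₁)
          (fun u => vit_nonneg k₁ u) (by rw [hmode]) (by rw [hmode]) havg
        exact lt_of_le_of_lt (vit_nonneg k₁ _) hW
  -- Phase 2: from inside the BSCC, the maximal vertex is reached within k steps
  have reach2 : ∀ (n₁ : ℕ) (hR1 : visit tb f1 f2 v n₁ ∈ Rp G p)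
      (hp1 : 0 < B - (play tb f1 f2 v n₁).pay1) (k : ℕ), ∀ n, n₁ ≤ n →
      vit G ({mvert G p (visit tb f1 f2 v n₁)} : Set V) ∅ k (visit tb f1 f2 v n)
        < B - (play tb f1 f2 v n).pay1 →
      ∃ j, visit tb f1 f2 v (n+j) = mvert G p (visit tb f1 f2 v n₁) := by
    intro n₁ hR1 hp1 k
    induction k using Nat.strong_induction_on with
    | _ k IH =>
    intro n hn hk
    by_cases heq : visit tb f1 f2 v n = mvert G p (visit tb f1 f2 v n₁)
    · exact ⟨0, by simpa using heq⟩
    · have hfacts := hinv n₁ hR1 hp1 n hn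
      have hmv : mvert G p (visit tb f1 f2 v n) = mvert G p (visit tb f1 f2 v n₁) :=
        mvert_congr G p hfacts.2.1
      have hne : ¬(visit tb f1 f2 v n = mvert G p (visit tb f1 f2 v n)) := by
        rw [hmv]; exact heq
      have hxnm : visit tb f1 f2 v n ∉
          ({mvert G p (visit tb f1 f2 v n)} : Set V) := by
        simpa [Set.mem_singleton_iff] using hne
      have hk' : vit G ({mvert G p (visit tb f1 f2 v n)} : Set V) ∅ k
          (visit tb f1 f2 v n) < B - (play tb f1 f2 v n).pay1 := by
        rw [hmv]; exact hk
      have hex : ∃ i, vit G ({mvert G p (visit tb f1 f2 v n)} : Set V) ∅ i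
          (visit tb f1 f2 v n) < B - (play tb f1 f2 v n).pay1 := ⟨k, hk'⟩
      have hk₀le : Nat.find hex ≤ k := Nat.find_min' hex hk'
      have hk₀spec := Nat.find_spec hex
      have hk₀pos : Nat.find hex ≠ 0 := by
        intro h0
        rw [h0, vit_zero_eq_one hxnm] at hk₀spec
        exact absurd hk₀spec (not_lt.mpr (hle1 n))
      obtain ⟨k₁, hk₁⟩ : ∃ k₁, Nat.find hex = k₁ + 1 :=
        ⟨Nat.find hex - 1, (Nat.succ_pred_eq_of_pos (Nat.pos_of_ne_zero hk₀pos)).symm⟩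
      have hmode := hinatk n hfacts.1 hne hex
      have hsub : Nat.find hex - 1 = k₁ := by omega
      rw [hsub] at hmode
      have havg : ((G.adj (visit tb f1 f2 v n)).sup' (G.adj_nonempty _)
            (vit G ({mvert G p (visit tb f1 f2 v n)} : Set V) ∅ k₁)
          + (G.adj (visit tb f1 f2 v n)).inf' (G.adj_nonempty _)
            (vit G ({mvert G p (visit tb f1 f2 v n)} : Set V) ∅ k₁)) / 2
          < B - (play tb f1 f2 v n).pay1 := by
        rw [hk₁, vit_succ_apply, if_neg hxnm, if_neg (Set.notMem_empty _)] at hk₀spec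
        exact hk₀spec
      have hW := hstep n (vit G ({mvert G p (visit tb f1 f2 v n)} : Set V) ∅ k₁)
        (fun u => vit_nonneg k₁ u) (by rw [hmode]) (by rw [hmode]) havg
      have hW' : vit G ({mvert G p (visit tb f1 f2 v n₁)} : Set V) ∅ k₁
          (visit tb f1 f2 v (n+1)) < B - (play tb f1 f2 v (n+1)).pay1 := by
        rw [← hmv]; exact hW
      obtain ⟨j, hj⟩ := IH k₁ (by omega) (n+1) (by omega) hW'
      refine ⟨j+1, ?_⟩
      rw [show n + (j+1) = (n+1) + j from by omega]
      exact hj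
  -- Phase 2: the maximal vertex is visited at arbitrarily late times
  have hvisits : ∀ (n₁ : ℕ), visit tb f1 f2 v n₁ ∈ Rp G p →
      0 < B - (play tb f1 f2 v n₁).pay1 →
      ∀ N, ∃ n' ≥ N, visit tb f1 f2 v n' = mvert G p (visit tb f1 f2 v n₁) := by
    intro n₁ hR1 hp1 N
    set n := max N n₁ with hn
    have hn1 : n₁ ≤ n := le_max_right N n₁
    have hfacts := hinv n₁ hR1 hp1 n hn1
    have hbscc : InBSCC G (visit tb f1 f2 v n) := hfacts.1.1
    have hvz : vlim G ({mvert G p (visit tb f1 f2 v n)} : Set V) ∅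
        (visit tb f1 f2 v n) = 0 :=
      vlim_buchi_zero p hbscc (self_mem_reachF G _)
    have hmv : mvert G p (visit tb f1 f2 v n) = mvert G p (visit tb f1 f2 v n₁) :=
      mvert_congr G p hfacts.2.1
    have hex : ∃ i, vit G ({mvert G p (visit tb f1 f2 v n₁)} : Set V) ∅ i
        (visit tb f1 f2 v n) < B - (play tb f1 f2 v n).pay1 := by
      have : vlim G ({mvert G p (visit tb f1 f2 v n₁)} : Set V) ∅
          (visit tb f1 f2 v n) = 0 := by rw [← hmv]; exact hvz
      apply exists_vit_lt
      rw [this]; exact hfacts.2.2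
    obtain ⟨k, hkk⟩ := hex
    obtain ⟨j, hj⟩ := reach2 n₁ hR1 hp1 k n hn1 hkk
    exact ⟨n + j, le_trans (le_max_left N n₁) (Nat.le_add_right n j), hj⟩
  -- assemble
  have hv0 : vlim G (Rp G p) (Sp G p) (visit tb f1 f2 v 0)
      < B - (play tb f1 f2 v 0).pay1 := by
    rw [play_zero_pay1]
    simpa [visit, play_zero_cur] using hB
  obtain ⟨k0, hk0⟩ := exists_vit_lt hv0
  obtain ⟨j, hjle, hjR, hjpos, hjpre⟩ := reach1 k0 0 hk0
  simp only [Nat.zero_add] at hjR hjpos hjpre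
  constructor
  · exact ⟨j, hjR, fun m hm => (hjpre m hm).2⟩
  · have hgreat : IsGreatest {k : ℕ | ∀ N : ℕ, ∃ n ≥ N, p (visit tb f1 f2 v n) = k}
        (p (mvert G p (visit tb f1 f2 v j))) := by
      constructor
      · intro N
        obtain ⟨n', hn', he⟩ := hvisits j hjR hjpos N
        exact ⟨n', hn', by rw [he]⟩
      · intro k hk
        obtain ⟨n, hn, he⟩ := hk j
        have hfacts := hinv j hjR hjpos n hn
        have hmem : visit tb f1 f2 v n ∈ reachF G (visit tb f1 f2 v j) := by
          rw [← hfacts.2.1]; exact self_mem_reachF G _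
        have hle := Finset.le_sup' p hmem
        rw [he] at hle
        rw [mvert_p G p (visit tb f1 f2 v j), bsccMaxIndex_def]
        exact hle
    show Odd (sSup {k : ℕ | ∀ N : ℕ, ∃ n ≥ N, p (visit tb f1 f2 v n) = k})
    rw [hgreat.csSup_eq, mvert_p G p (visit tb f1 f2 v j)]
    exact hjR.2

end Master1
section Master2

variable {V : Type} [Fintype V]

lemma master2 (G : BiddingGame V) (p : V → ℕ) {B : ℝ} (v : V)
    (hB : vlim G (Sp G p) (Rp G p) v < B) (tb : TieBreak V) :
    ∃ f2 : Strat V, Legal2 G f2 B ∧ ∀ f1 : Strat V, Legal1 G f1 (1 - B) →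
      Win2RichmanSet tb f1 f2 v (Rp G p) (Sp G p) ∧ ¬ Win1Parity p tb f1 f2 v := by
  have hB0 : 0 ≤ B := le_of_lt (lt_of_le_of_lt (vlim_nonneg v) hB)
  refine ⟨strat2 G p (Sp G p) (Rp G p) B, strat2_legal hB0, ?_⟩
  set f2 : Strat V := strat2 G p (Sp G p) (Rp G p) B with hf2d
  intro f1 hf1
  have hge0 : ∀ n, 0 ≤ B - (play tb f1 f2 v n).pay2 := strat2_budget_nonneg hB0 tb f1 v
  have hle1 : ∀ n, B - (play tb f1 f2 v n).pay2 ≤ 1 := fun n => budget2_le_one hf1 n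
  have hpay2 : ∀ n, B - (play tb f1 f2 v n).pay2 = B + (play tb f1 f2 v n).pay1 := by
    intro n; simp [Hist.pay2, sub_neg_eq_add]
  have hadj : ∀ n, visit tb f1 f2 v (n+1) ∈ G.adj (visit tb f1 f2 v n) := by
    intro n
    show (play tb f1 f2 v (n+1)).cur ∈ _
    have hpl : play tb f1 f2 v (n+1) = extend tb f1 f2 (play tb f1 f2 v n) := rfl
    rw [hpl, cur_extend]
    split
    · exact mem_adj.mpr (hf1 tb f2 v n).2.2
    · exact gact_snd_adj G p _ _ _ _
  -- the core bidding step for Player 2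
  have hstep : ∀ (n : ℕ) (W : V → ℝ), (∀ u, 0 ≤ W u) →
      (f2 (play tb f1 f2 v n)).1
        = max 0 (min (gbid G W (visit tb f1 f2 v n)) (B - (play tb f1 f2 v n).pay2)) →
      (f2 (play tb f1 f2 v n)).2 = amin G W (visit tb f1 f2 v n) →
      ((G.adj (visit tb f1 f2 v n)).sup' (G.adj_nonempty _) W
        + (G.adj (visit tb f1 f2 v n)).inf' (G.adj_nonempty _) W) / 2
        < B - (play tb f1 f2 v n).pay2 →
      W (visit tb f1 f2 v (n+1)) < B - (play tb f1 f2 v (n+1)).pay2 := by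
    intro n W hW0 hb1 hb2 hβn
    set h := play tb f1 f2 v n with hh
    set x := visit tb f1 f2 v n with hxd
    set Sw := (G.adj x).sup' (G.adj_nonempty x) W with hSw
    set Iw := (G.adj x).inf' (G.adj_nonempty x) W with hIw
    have hIw0 : 0 ≤ Iw := Finset.le_inf' _ _ (fun u _ => hW0 u)
    have hIS : Iw ≤ Sw := adj_inf'_le_sup' G W x
    have hbid : (f2 h).1 = (Sw - Iw)/2 := by
      rw [hb1]
      have hg : gbid G W x = (Sw - Iw)/2 := rfl
      rw [hg, min_eq_left (by linarith), max_eq_right (by linarith)]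
    have hplay : play tb f1 f2 v (n+1) = extend tb f1 f2 h := rfl
    rw [hpay2 n] at hβn
    show W (play tb f1 f2 v (n+1)).cur < B - (play tb f1 f2 v (n+1)).pay2
    rw [hpay2 (n+1)]
    show W (play tb f1 f2 v (n+1)).cur < B + (play tb f1 f2 v (n+1)).pay1
    rw [hplay, cur_extend, pay1_extend]
    by_cases hw : ((f2 h).1 < (f1 h).1 ∨ ((f1 h).1 = (f2 h).1 ∧ tb h = true))
    · rw [if_pos hw, if_pos hw]
      have hl : (f2 h).1 ≤ (f1 h).1 := win1_ge tb f1 f2 h hw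
      rw [hbid] at hl
      have hmem : (f1 h).2 ∈ G.adj x := mem_adj.mpr (hf1 tb f2 v n).2.2
      have hWle : W ((f1 h).2) ≤ Sw := Finset.le_sup' W hmem
      linarith
    · rw [if_neg hw, if_neg hw, hb2]
      have hav : W (amin G W x) = Iw := (amin_val G W x).symm
      rw [hav, hbid]
      linarith
  -- mode: outside Sp, attack Sp avoiding Rp
  have hout : ∀ (n : ℕ) (hx : visit tb f1 f2 v n ∉ Sp G p)
      (hex : ∃ i, vit G (Sp G p) (Rp G p) i (visit tb f1 f2 v n)
        < B - (play tb f1 f2 v n).pay2),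
      f2 (play tb f1 f2 v n)
        = (max 0 (min (gbid G (vit G (Sp G p) (Rp G p) (Nat.find hex - 1))
              (visit tb f1 f2 v n)) (B - (play tb f1 f2 v n).pay2)),
           amin G (vit G (Sp G p) (Rp G p) (Nat.find hex - 1)) (visit tb f1 f2 v n)) := by
    intro n hx hex
    have hg : gact G p (Sp G p) (Rp G p) (visit tb f1 f2 v n)
        (B - (play tb f1 f2 v n).pay2)
        = (gbid G (vit G (Sp G p) (Rp G p) (Nat.find hex - 1)) (visit tb f1 f2 v n),
           amin G (vit G (Sp G p) (Rp G p) (Nat.find hex - 1)) (visit tb f1 f2 v n)) := by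
      unfold gact
      rw [if_neg hx, dif_pos hex]
    show (max 0 (min (gact G p (Sp G p) (Rp G p) (visit tb f1 f2 v n)
        (B - (play tb f1 f2 v n).pay2)).1 (B - (play tb f1 f2 v n).pay2)),
        (gact G p (Sp G p) (Rp G p) (visit tb f1 f2 v n)
        (B - (play tb f1 f2 v n).pay2)).2) = _
    rw [hg]
  -- mode: inside Sp, at the maximal vertex
  have hinm : ∀ (n : ℕ), visit tb f1 f2 v n ∈ Sp G p →
      visit tb f1 f2 v n = mvert G p (visit tb f1 f2 v n) →
      (f2 (play tb f1 f2 v n)).1 = 0 := by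
    intro n hx heq
    have hg : (gact G p (Sp G p) (Rp G p) (visit tb f1 f2 v n)
        (B - (play tb f1 f2 v n).pay2)).1 = 0 := by
      unfold gact
      rw [if_pos hx, if_pos heq]
    show max 0 (min (gact G p (Sp G p) (Rp G p) (visit tb f1 f2 v n)
        (B - (play tb f1 f2 v n).pay2)).1 (B - (play tb f1 f2 v n).pay2)) = 0
    rw [hg, min_eq_left (hge0 n), max_self]
  -- mode: inside Sp, attacking the maximal vertex
  have hinatk : ∀ (n : ℕ) (hx : visit tb f1 f2 v n ∈ Sp G p)
      (hne : ¬(visit tb f1 f2 v n = mvert G p (visit tb f1 f2 v n)))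
      (hex : ∃ i, vit G ({mvert G p (visit tb f1 f2 v n)} : Set V) ∅ i
        (visit tb f1 f2 v n) < B - (play tb f1 f2 v n).pay2),
      f2 (play tb f1 f2 v n)
        = (max 0 (min (gbid G (vit G ({mvert G p (visit tb f1 f2 v n)} : Set V) ∅
              (Nat.find hex - 1)) (visit tb f1 f2 v n)) (B - (play tb f1 f2 v n).pay2)),
           amin G (vit G ({mvert G p (visit tb f1 f2 v n)} : Set V) ∅ (Nat.find hex - 1))
             (visit tb f1 f2 v n)) := by
    intro n hx hne hex
    have hg : gact G p (Sp G p) (Rp G p) (visit tb f1 f2 v n)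
        (B - (play tb f1 f2 v n).pay2)
        = (gbid G (vit G ({mvert G p (visit tb f1 f2 v n)} : Set V) ∅ (Nat.find hex - 1))
            (visit tb f1 f2 v n),
           amin G (vit G ({mvert G p (visit tb f1 f2 v n)} : Set V) ∅ (Nat.find hex - 1))
            (visit tb f1 f2 v n)) := by
      unfold gact
      rw [if_pos hx, if_neg hne, dif_pos hex]
    show (max 0 (min (gact G p (Sp G p) (Rp G p) (visit tb f1 f2 v n)
        (B - (play tb f1 f2 v n).pay2)).1 (B - (play tb f1 f2 v n).pay2)),
        (gact G p (Sp G p) (Rp G p) (visit tb f1 f2 v n)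
        (B - (play tb f1 f2 v n).pay2)).2) = _
    rw [hg]
  -- Phase 1: reach Sp while avoiding Rp
  have reach1 : ∀ (k n : ℕ),
      vit G (Sp G p) (Rp G p) k (visit tb f1 f2 v n) < B - (play tb f1 f2 v n).pay2 →
      ∃ j, j ≤ k ∧ visit tb f1 f2 v (n+j) ∈ Sp G p ∧
        0 < B - (play tb f1 f2 v (n+j)).pay2 ∧
        ∀ j' < j, visit tb f1 f2 v (n+j') ∉ Sp G p ∧ visit tb f1 f2 v (n+j') ∉ Rp G p := by
    intro k
    induction k using Nat.strong_induction_on with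
    | _ k IH =>
    intro n hk
    by_cases hxR : visit tb f1 f2 v n ∈ Sp G p
    · refine ⟨0, Nat.zero_le k, by simpa using hxR, ?_,
        fun j' hj' => absurd hj' (Nat.not_lt_zero j')⟩
      have h0 := vit_nonneg (G := G) (A := Sp G p) (Bs := Rp G p) k (visit tb f1 f2 v n)
      simpa using lt_of_le_of_lt h0 hk
    · have hxS : visit tb f1 f2 v n ∉ Rp G p := by
        intro hs
        rw [vit_one_of_mem_Bs hxR hs k] at hk
        exact absurd hk (not_lt.mpr (hle1 n))
      have hex : ∃ i, vit G (Sp G p) (Rp G p) i (visit tb f1 f2 v n)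
          < B - (play tb f1 f2 v n).pay2 := ⟨k, hk⟩
      have hk₀le : Nat.find hex ≤ k := Nat.find_min' hex hk
      have hk₀spec := Nat.find_spec hex
      have hk₀pos : Nat.find hex ≠ 0 := by
        intro h0
        rw [h0, vit_zero_eq_one hxR] at hk₀spec
        exact absurd hk₀spec (not_lt.mpr (hle1 n))
      obtain ⟨k₁, hk₁⟩ : ∃ k₁, Nat.find hex = k₁ + 1 :=
        ⟨Nat.find hex - 1, (Nat.succ_pred_eq_of_pos (Nat.pos_of_ne_zero hk₀pos)).symm⟩
      have hmode := hout n hxR hex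
      have hsub : Nat.find hex - 1 = k₁ := by omega
      rw [hsub] at hmode
      have havg : ((G.adj (visit tb f1 f2 v n)).sup' (G.adj_nonempty _)
            (vit G (Sp G p) (Rp G p) k₁)
          + (G.adj (visit tb f1 f2 v n)).inf' (G.adj_nonempty _)
            (vit G (Sp G p) (Rp G p) k₁)) / 2
          < B - (play tb f1 f2 v n).pay2 := by
        rw [hk₁, vit_succ_apply, if_neg hxR, if_neg hxS] at hk₀spec
        exact hk₀spec
      have hW := hstep n (vit G (Sp G p) (Rp G p) k₁) (fun u => vit_nonneg k₁ u)
        (by rw [hmode]) (by rw [hmode]) havg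
      obtain ⟨j, hjle, hjR, hjpos, hjpre⟩ := IH k₁ (by omega) (n+1) hW
      refine ⟨j+1, by omega, ?_, ?_, ?_⟩
      · rw [show n + (j+1) = (n+1) + j from by omega]; exact hjR
      · rw [show n + (j+1) = (n+1) + j from by omega]; exact hjpos
      · intro j' hj'
        cases j' with
        | zero => simpa using ⟨hxR, hxS⟩
        | succ j'' =>
          rw [show n + (j''+1) = (n+1) + j'' from by omega]
          exact hjpre j'' (by omega)
  -- Phase 2 invariant
  have hinv : ∀ (n₁ : ℕ), visit tb f1 f2 v n₁ ∈ Sp G p →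
      0 < B - (play tb f1 f2 v n₁).pay2 →
      ∀ n, n₁ ≤ n → visit tb f1 f2 v n ∈ Sp G p ∧
        reachF G (visit tb f1 f2 v n) = reachF G (visit tb f1 f2 v n₁) ∧
        0 < B - (play tb f1 f2 v n).pay2 := by
    intro n₁ hR hpos n hn
    induction n, hn using Nat.le_induction with
    | base => exact ⟨hR, rfl, hpos⟩
    | succ n hn ih =>
      obtain ⟨ihR, ihreach, ihpos⟩ := ih
      have hEdge : G.E (visit tb f1 f2 v n) (visit tb f1 f2 v (n+1)) :=
        mem_adj.mp (hadj n)
      have hbscc : InBSCC G (visit tb f1 f2 v n) := ihR.1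
      have hRnext : visit tb f1 f2 v (n+1) ∈ Sp G p := Sp_closed ihR hEdge
      have hreach : reachF G (visit tb f1 f2 v (n+1)) = reachF G (visit tb f1 f2 v n₁) := by
        rw [hbscc.reachF_eq (Relation.ReflTransGen.single hEdge)]
        exact ihreach
      refine ⟨hRnext, hreach, ?_⟩
      by_cases hm : visit tb f1 f2 v n = mvert G p (visit tb f1 f2 v n)
      · have hb0 : (f2 (play tb f1 f2 v n)).1 = 0 := hinm n ihR hm
        have hplay : play tb f1 f2 v (n+1) = extend tb f1 f2 (play tb f1 f2 v n) := rfl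
        show 0 < B - (play tb f1 f2 v (n+1)).pay2
        rw [hpay2 (n+1)]
        rw [hpay2 n] at ihpos
        show 0 < B + (play tb f1 f2 v (n+1)).pay1
        rw [hplay, pay1_extend]
        by_cases hw : ((f2 (play tb f1 f2 v n)).1 < (f1 (play tb f1 f2 v n)).1 ∨
            ((f1 (play tb f1 f2 v n)).1 = (f2 (play tb f1 f2 v n)).1 ∧
              tb (play tb f1 f2 v n) = true))
        · rw [if_pos hw]
          have h2 : (f2 (play tb f1 f2 v n)).1 ≤ (f1 (play tb f1 f2 v n)).1 :=
            win1_ge tb f1 f2 _ hw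
          rw [hb0] at h2
          linarith
        · rw [if_neg hw, hb0]; linarith
      · have hvz : vlim G ({mvert G p (visit tb f1 f2 v n)} : Set V) ∅
            (visit tb f1 f2 v n) = 0 :=
          vlim_buchi_zero p hbscc (self_mem_reachF G _)
        have hex : ∃ i, vit G ({mvert G p (visit tb f1 f2 v n)} : Set V) ∅ i
            (visit tb f1 f2 v n) < B - (play tb f1 f2 v n).pay2 := by
          apply exists_vit_lt
          rw [hvz]; exact ihpos
        have hk₀spec := Nat.find_spec hex
        have hxnm : visit tb f1 f2 v n ∉ ({mvert G p (visit tb f1 f2 v n)} : Set V) := by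
          simpa [Set.mem_singleton_iff] using hm
        have hk₀pos : Nat.find hex ≠ 0 := by
          intro h0
          rw [h0, vit_zero_eq_one hxnm] at hk₀spec
          exact absurd hk₀spec (not_lt.mpr (hle1 n))
        obtain ⟨k₁, hk₁⟩ : ∃ k₁, Nat.find hex = k₁ + 1 :=
          ⟨Nat.find hex - 1, (Nat.succ_pred_eq_of_pos (Nat.pos_of_ne_zero hk₀pos)).symm⟩
        have hmode := hinatk n ihR hm hex
        have hsub : Nat.find hex - 1 = k₁ := by omega
        rw [hsub] at hmode
        have havg : ((G.adj (visit tb f1 f2 v n)).sup' (G.adj_nonempty _)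
              (vit G ({mvert G p (visit tb f1 f2 v n)} : Set V) ∅ k₁)
            + (G.adj (visit tb f1 f2 v n)).inf' (G.adj_nonempty _)
              (vit G ({mvert G p (visit tb f1 f2 v n)} : Set V) ∅ k₁)) / 2
            < B - (play tb f1 f2 v n).pay2 := by
          rw [hk₁, vit_succ_apply, if_neg hxnm, if_neg (Set.notMem_empty _)] at hk₀spec
          exact hk₀spec
        have hW := hstep n (vit G ({mvert G p (visit tb f1 f2 v n)} : Set V) ∅ k₁)
          (fun u => vit_nonneg k₁ u) (by rw [hmode]) (by rw [hmode]) havg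
        exact lt_of_le_of_lt (vit_nonneg k₁ _) hW
  -- Phase 2: reaching the maximal vertex
  have reach2 : ∀ (n₁ : ℕ) (hR1 : visit tb f1 f2 v n₁ ∈ Sp G p)
      (hp1 : 0 < B - (play tb f1 f2 v n₁).pay2) (k : ℕ), ∀ n, n₁ ≤ n →
      vit G ({mvert G p (visit tb f1 f2 v n₁)} : Set V) ∅ k (visit tb f1 f2 v n)
        < B - (play tb f1 f2 v n).pay2 →
      ∃ j, visit tb f1 f2 v (n+j) = mvert G p (visit tb f1 f2 v n₁) := by
    intro n₁ hR1 hp1 k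
    induction k using Nat.strong_induction_on with
    | _ k IH =>
    intro n hn hk
    by_cases heq : visit tb f1 f2 v n = mvert G p (visit tb f1 f2 v n₁)
    · exact ⟨0, by simpa using heq⟩
    · have hfacts := hinv n₁ hR1 hp1 n hn
      have hmv : mvert G p (visit tb f1 f2 v n) = mvert G p (visit tb f1 f2 v n₁) :=
        mvert_congr G p hfacts.2.1
      have hne : ¬(visit tb f1 f2 v n = mvert G p (visit tb f1 f2 v n)) := by
        rw [hmv]; exact heq
      have hxnm : visit tb f1 f2 v n ∉
          ({mvert G p (visit tb f1 f2 v n)} : Set V) := by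
        simpa [Set.mem_singleton_iff] using hne
      have hk' : vit G ({mvert G p (visit tb f1 f2 v n)} : Set V) ∅ k
          (visit tb f1 f2 v n) < B - (play tb f1 f2 v n).pay2 := by
        rw [hmv]; exact hk
      have hex : ∃ i, vit G ({mvert G p (visit tb f1 f2 v n)} : Set V) ∅ i
          (visit tb f1 f2 v n) < B - (play tb f1 f2 v n).pay2 := ⟨k, hk'⟩
      have hk₀le : Nat.find hex ≤ k := Nat.find_min' hex hk'
      have hk₀spec := Nat.find_spec hex
      have hk₀pos : Nat.find hex ≠ 0 := by
        intro h0
        rw [h0, vit_zero_eq_one hxnm] at hk₀spec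
        exact absurd hk₀spec (not_lt.mpr (hle1 n))
      obtain ⟨k₁, hk₁⟩ : ∃ k₁, Nat.find hex = k₁ + 1 :=
        ⟨Nat.find hex - 1, (Nat.succ_pred_eq_of_pos (Nat.pos_of_ne_zero hk₀pos)).symm⟩
      have hmode := hinatk n hfacts.1 hne hex
      have hsub : Nat.find hex - 1 = k₁ := by omega
      rw [hsub] at hmode
      have havg : ((G.adj (visit tb f1 f2 v n)).sup' (G.adj_nonempty _)
            (vit G ({mvert G p (visit tb f1 f2 v n)} : Set V) ∅ k₁)
          + (G.adj (visit tb f1 f2 v n)).inf' (G.adj_nonempty _)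
            (vit G ({mvert G p (visit tb f1 f2 v n)} : Set V) ∅ k₁)) / 2
          < B - (play tb f1 f2 v n).pay2 := by
        rw [hk₁, vit_succ_apply, if_neg hxnm, if_neg (Set.notMem_empty _)] at hk₀spec
        exact hk₀spec
      have hW := hstep n (vit G ({mvert G p (visit tb f1 f2 v n)} : Set V) ∅ k₁)
        (fun u => vit_nonneg k₁ u) (by rw [hmode]) (by rw [hmode]) havg
      have hW' : vit G ({mvert G p (visit tb f1 f2 v n₁)} : Set V) ∅ k₁
          (visit tb f1 f2 v (n+1)) < B - (play tb f1 f2 v (n+1)).pay2 := by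
        rw [← hmv]; exact hW
      obtain ⟨j, hj⟩ := IH k₁ (by omega) (n+1) (by omega) hW'
      refine ⟨j+1, ?_⟩
      rw [show n + (j+1) = (n+1) + j from by omega]
      exact hj
  -- visits at arbitrarily late times
  have hvisits : ∀ (n₁ : ℕ), visit tb f1 f2 v n₁ ∈ Sp G p →
      0 < B - (play tb f1 f2 v n₁).pay2 →
      ∀ N, ∃ n' ≥ N, visit tb f1 f2 v n' = mvert G p (visit tb f1 f2 v n₁) := by
    intro n₁ hR1 hp1 N
    set n := max N n₁ with hn
    have hn1 : n₁ ≤ n := le_max_right N n₁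
    have hfacts := hinv n₁ hR1 hp1 n hn1
    have hbscc : InBSCC G (visit tb f1 f2 v n) := hfacts.1.1
    have hvz : vlim G ({mvert G p (visit tb f1 f2 v n)} : Set V) ∅
        (visit tb f1 f2 v n) = 0 :=
      vlim_buchi_zero p hbscc (self_mem_reachF G _)
    have hmv : mvert G p (visit tb f1 f2 v n) = mvert G p (visit tb f1 f2 v n₁) :=
      mvert_congr G p hfacts.2.1
    have hex : ∃ i, vit G ({mvert G p (visit tb f1 f2 v n₁)} : Set V) ∅ i
        (visit tb f1 f2 v n) < B - (play tb f1 f2 v n).pay2 := by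
      have hvz' : vlim G ({mvert G p (visit tb f1 f2 v n₁)} : Set V) ∅
          (visit tb f1 f2 v n) = 0 := by rw [← hmv]; exact hvz
      apply exists_vit_lt
      rw [hvz']; exact hfacts.2.2
    obtain ⟨k, hkk⟩ := hex
    obtain ⟨j, hj⟩ := reach2 n₁ hR1 hp1 k n hn1 hkk
    exact ⟨n + j, le_trans (le_max_left N n₁) (Nat.le_add_right n j), hj⟩
  -- assemble
  have hv0 : vlim G (Sp G p) (Rp G p) (visit tb f1 f2 v 0)
      < B - (play tb f1 f2 v 0).pay2 := by
    have hzero : (play tb f1 f2 v 0).pay2 = 0 := by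
      simp [Hist.pay2, play_zero_pay1]
    rw [hzero]
    simpa [visit, play_zero_cur] using hB
  obtain ⟨k0, hk0⟩ := exists_vit_lt hv0
  obtain ⟨j, hjle, hjR, hjpos, hjpre⟩ := reach1 k0 0 hk0
  simp only [Nat.zero_add] at hjR hjpos hjpre
  constructor
  · exact Or.inl ⟨j, hjR, fun m hm => (hjpre m hm).2⟩
  · have hgreat : IsGreatest {k : ℕ | ∀ N : ℕ, ∃ n ≥ N, p (visit tb f1 f2 v n) = k}
        (p (mvert G p (visit tb f1 f2 v j))) := by
      constructor
      · intro N
        obtain ⟨n', hn', he⟩ := hvisits j hjR hjpos N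
        exact ⟨n', hn', by rw [he]⟩
      · intro k hk
        obtain ⟨n, hn, he⟩ := hk j
        have hfacts := hinv j hjR hjpos n hn
        have hmem : visit tb f1 f2 v n ∈ reachF G (visit tb f1 f2 v j) := by
          rw [← hfacts.2.1]; exact self_mem_reachF G _
        have hle := Finset.le_sup' p hmem
        rw [he] at hle
        rw [mvert_p G p (visit tb f1 f2 v j), bsccMaxIndex_def]
        exact hle
    intro hodd
    have hsup : sSup {k : ℕ | ∀ N : ℕ, ∃ n ≥ N, p (visit tb f1 f2 v n) = k}
        = p (mvert G p (visit tb f1 f2 v j)) := hgreat.csSup_eq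
    have hodd' : Odd (sSup {k : ℕ | ∀ N : ℕ, ∃ n ≥ N, p (visit tb f1 f2 v n) = k}) := hodd
    rw [hsup, mvert_p G p (visit tb f1 f2 v j)] at hodd'
    exact hjR.2 hodd'

end Master2
section Final

variable {V : Type} [Fintype V]

lemma isThreshParity_vlim (G : BiddingGame V) (p : V → ℕ) (v : V) :
    IsThreshParity G p v (vlim G (Rp G p) (Sp G p) v) := by
  constructor
  · intro B _ htB tb
    obtain ⟨f1, hleg, hwin⟩ := master1 G p v htB tb
    exact ⟨f1, hleg, fun f2 hf2 => (hwin f2 hf2).2⟩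
  · intro B _ htB tb
    have hσ : vlim G (Sp G p) (Rp G p) v < B := by
      rw [vlim_swap_RpSp]; exact htB
    obtain ⟨f2, hleg, hwin⟩ := master2 G p v hσ tb
    exact ⟨f2, hleg, fun f1 hf1 => (hwin f1 hf1).2⟩

lemma isThreshRichman_vlim (G : BiddingGame V) (p : V → ℕ) (v : V) :
    IsThreshRichmanSet G (Rp G p) (Sp G p) v (vlim G (Rp G p) (Sp G p) v) := by
  constructor
  · intro B _ htB tb
    obtain ⟨f1, hleg, hwin⟩ := master1 G p v htB tb
    exact ⟨f1, hleg, fun f2 hf2 => (hwin f2 hf2).1⟩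
  · intro B _ htB tb
    have hσ : vlim G (Sp G p) (Rp G p) v < B := by
      rw [vlim_swap_RpSp]; exact htB
    obtain ⟨f2, hleg, hwin⟩ := master2 G p v hσ tb
    exact ⟨f2, hleg, fun f1 hf1 => (hwin f1 hf1).1⟩

lemma parity_cross {G : BiddingGame V} {p : V → ℕ} {v : V} {t t' : ℝ}
    (h : IsThreshParity G p v t) (h' : IsThreshParity G p v t')
    (ht0 : 0 ≤ t) (ht1' : t' ≤ 1) (hlt : t < t') : False := by
  set B : ℝ := (t + t')/2 with hBd
  have htB : t < B := by rw [hBd]; linarith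
  have hBt' : B < t' := by rw [hBd]; linarith
  have hB1 : B ≤ 1 := by linarith
  have hB0 : 0 ≤ B := by linarith
  have h1 := h.1 B hB1 htB
  have h2 := h'.2 (1 - B) (by linarith) (by linarith)
  obtain ⟨f1, hf1, hw1⟩ := h1 (fun _ => false)
  obtain ⟨f2, hf2, hw2⟩ := h2 (fun _ => false)
  have hsw := hw1 f2 hf2
  have hf1' : Legal1 G f1 (1 - (1 - B)) := by rwa [sub_sub_cancel]
  exact (hw2 f1 hf1') hsw

lemma richman_conflict {G : BiddingGame V} {p : V → ℕ} {tb : TieBreak V}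
    {f1 f2 : Strat V} {v : V}
    (h1 : Win1RichmanSet tb f1 f2 v (Rp G p) (Sp G p))
    (h2 : Win2RichmanSet tb f1 f2 v (Rp G p) (Sp G p)) : False := by
  obtain ⟨n, hn, hpre⟩ := h1
  rcases h2 with ⟨n', hn', hpre'⟩ | hall
  · rcases lt_trichotomy n n' with hlt | heq | hgt
    · exact hpre' n hlt hn
    · subst heq; exact hn'.2 hn.2
    · exact hpre n' hgt hn'
  · exact (hall n).1 hn

lemma richman_cross {G : BiddingGame V} {p : V → ℕ} {v : V} {t t' : ℝ}
    (h : IsThreshRichmanSet G (Rp G p) (Sp G p) v t)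
    (h' : IsThreshRichmanSet G (Rp G p) (Sp G p) v t')
    (ht0 : 0 ≤ t) (ht1' : t' ≤ 1) (hlt : t < t') : False := by
  set B : ℝ := (t + t')/2 with hBd
  have htB : t < B := by rw [hBd]; linarith
  have hBt' : B < t' := by rw [hBd]; linarith
  have hB1 : B ≤ 1 := by linarith
  have hB0 : 0 ≤ B := by linarith
  have h1 := h.1 B hB1 htB
  have h2 := h'.2 (1 - B) (by linarith) (by linarith)
  obtain ⟨f1, hf1, hw1⟩ := h1 (fun _ => false)
  obtain ⟨f2, hf2, hw2⟩ := h2 (fun _ => false)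
  have hsw := hw1 f2 hf2
  have hf1' : Legal1 G f1 (1 - (1 - B)) := by rwa [sub_sub_cancel]
  exact richman_conflict (G := G) (p := p) hsw (hw2 f1 hf1')

lemma parity_thresh_unique {G : BiddingGame V} {p : V → ℕ} {v : V} {t t' : ℝ}
    (h : IsThreshParity G p v t) (h' : IsThreshParity G p v t')
    (ht0 : 0 ≤ t) (ht1 : t ≤ 1) (ht0' : 0 ≤ t') (ht1' : t' ≤ 1) : t = t' := by
  by_contra hne
  rcases lt_or_gt_of_ne hne with hlt | hgt
  · exact parity_cross h h' ht0 ht1' hlt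
  · exact parity_cross h' h ht0' ht1 hgt

lemma richman_thresh_unique {G : BiddingGame V} {p : V → ℕ} {v : V} {t t' : ℝ}
    (h : IsThreshRichmanSet G (Rp G p) (Sp G p) v t)
    (h' : IsThreshRichmanSet G (Rp G p) (Sp G p) v t')
    (ht0 : 0 ≤ t) (ht1 : t ≤ 1) (ht0' : 0 ≤ t') (ht1' : t' ≤ 1) : t = t' := by
  by_contra hne
  rcases lt_or_gt_of_ne hne with hlt | hgt
  · exact richman_cross (p := p) h h' ht0 ht1' hlt
  · exact richman_cross (p := p) h' h ht0' ht1 hgt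

end Final

/-- The threshold budgets of a parity bidding game coincide with the
threshold budgets of the Richman game (on the same arena) whose Player 1 target set is
the union of the BSCCs with odd maximal parity index and whose Player 2 target set is
the union of the BSCCs with even maximal parity index. -/
theorem parity_thresholds_eq_richman_thresholds
    {V : Type} [Fintype V] (G : BiddingGame V) (p : V → ℕ) (v : V) (t : ℝ)
    (ht0 : 0 ≤ t) (ht1 : t ≤ 1) :
    IsThreshParity G p v t ↔
      IsThreshRichmanSet G
        {x | InBSCC G x ∧ Odd (bsccMaxIndex G p x)}
        {x | InBSCC G x ∧ ¬ Odd (bsccMaxIndex G p x)} v t := by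
  show IsThreshParity G p v t ↔ IsThreshRichmanSet G (Rp G p) (Sp G p) v t
  have hθ0 : 0 ≤ vlim G (Rp G p) (Sp G p) v := vlim_nonneg v
  have hθ1 : vlim G (Rp G p) (Sp G p) v ≤ 1 := vlim_le_one v
  constructor
  · intro h
    have heq : t = vlim G (Rp G p) (Sp G p) v :=
      parity_thresh_unique h (isThreshParity_vlim G p v) ht0 ht1 hθ0 hθ1
    rw [heq]
    exact isThreshRichman_vlim G p v
  · intro h
    have heq : t = vlim G (Rp G p) (Sp G p) v :=
      richman_thresh_unique h (isThreshRichman_vlim G p v) ht0 ht1 hθ0 hθ1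
    rw [heq]
    exact isThreshParity_vlim G p v
end

section
/- Consider a strongly-connected Büchi bidding game S = (V, E) with a set F ⊆ V of accepting vertices, where Player 1 wins an infinite outcome iff it visits F infinitely often. If S contains a cycle C that does not traverse any vertex of F, then for every k ∈ ℕ and every strictly positive initial budget of Player 2 (however small), Player 2 has a strategy that forces the token to traverse the cycle C k times without visiting any vertex of F; in particular, no accepting vertex is visited for at least k rounds. -/
open scoped Classical

namespace BPaux
set_option linter.unusedSectionVars false

variable {V : Type} [Fintype V]

/-- Player 1 wins the bidding at history `h`. -/
def P1W (tb : TieBreak V) (f1 f2 : Strat V) (h : Hist V) : Prop :=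
  (f2 h).1 < (f1 h).1 ∨ ((f1 h).1 = (f2 h).1 ∧ tb h = true)

lemma extend_pos {tb : TieBreak V} {f1 f2 : Strat V} {h : Hist V} (hw : P1W tb f1 f2 h) :
    extend tb f1 f2 h = ⟨h.init, h.rounds ++ [⟨(f1 h).2, (f1 h).1, true⟩]⟩ := if_pos hw

lemma extend_neg {tb : TieBreak V} {f1 f2 : Strat V} {h : Hist V} (hw : ¬ P1W tb f1 f2 h) :
    extend tb f1 f2 h = ⟨h.init, h.rounds ++ [⟨(f2 h).2, (f2 h).1, false⟩]⟩ := if_neg hw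

lemma cur_concat (i : V) (rs : List (BidRound V)) (r : BidRound V) :
    Hist.cur ⟨i, rs ++ [r]⟩ = r.dest := by
  simp [Hist.cur]

lemma pay1_concat (i : V) (rs : List (BidRound V)) (r : BidRound V) :
    Hist.pay1 ⟨i, rs ++ [r]⟩ =
      Hist.pay1 ⟨i, rs⟩ + (if r.p1Won then r.bid else -r.bid) := by
  simp [Hist.pay1]

lemma play_init (tb : TieBreak V) (f1 f2 : Strat V) (v0 : V) (n : ℕ) :
    (play tb f1 f2 v0 n).init = v0 := by
  induction n with
  | zero => rfl
  | succ n ih =>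
      show (extend tb f1 f2 (play tb f1 f2 v0 n)).init = v0
      unfold extend; split <;> simpa using ih

/-- number of biddings won by Player 1 so far -/
def fc (h : Hist V) : ℕ := (h.rounds.filter (fun r => r.p1Won)).length

lemma fc_concat (i : V) (rs : List (BidRound V)) (r : BidRound V) :
    fc (⟨i, rs ++ [r]⟩ : Hist V) = fc ⟨i, rs⟩ + (if r.p1Won then 1 else 0) := by
  by_cases hr : r.p1Won <;> simp [fc, List.filter_append, hr]

/-- state-machine update for Player 2's strategy -/
def upd (plan : V → List V) : Option (ℕ × List V) → BidRound V → Option (ℕ × List V)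
  | none, _ => none
  | some (j, rem), r =>
      if r.p1Won then some (0, plan r.dest)
      else if rem.length ≤ 1 then none else some (j + 1, rem.tail)

/-- the state reached after a history -/
def stf (plan : V → List V) (h : Hist V) : Option (ℕ × List V) :=
  h.rounds.foldl (upd plan) (some (0, plan h.init))

lemma stf_concat (plan : V → List V) (i : V) (rs : List (BidRound V)) (r : BidRound V) :
    stf plan ⟨i, rs ++ [r]⟩ = upd plan (stf plan ⟨i, rs⟩) r := by
  simp [stf, List.foldl_append]

/-- Player 2's strategy -/
noncomputable def f2def (plan : V → List V) (δ : ℝ) (nxt : V → V) : Strat V := fun h =>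
  match stf plan h with
  | none => (0, nxt h.cur)
  | some (j, rem) => (δ * 2 ^ j, rem.headD (nxt h.cur))

lemma f2bid_nonneg (plan : V → List V) {δ : ℝ} (hδ : 0 ≤ δ) (nxt : V → V) (h : Hist V) :
    0 ≤ (f2def plan δ nxt h).1 := by
  unfold f2def
  rcases hst : stf plan h with _ | ⟨j, rem⟩ <;> simp [hst]
  positivity

/-- The master invariant, as a function of the current state. -/
def InvState (G : BiddingGame V) (chead : V) (tailc : List V) (N : ℕ) (δ B : ℝ)
    (tb : TieBreak V) (f1 f2 : Strat V) (v0 : V) (n : ℕ) :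
    Option (ℕ × List V) → Prop
  | none =>
      0 ≤ B + (play tb f1 f2 v0 n).pay1 ∧
      ∃ m, ∀ i < tailc.length + 1,
        visit tb f1 f2 v0 (m + i) = (chead :: tailc).getD i v0
  | some (j, rem) =>
      rem ≠ [] ∧ List.Chain G.E (play tb f1 f2 v0 n).cur rem ∧ j + rem.length ≤ N ∧
      (fc (play tb f1 f2 v0 n) : ℝ) * δ - (2 ^ j - 1) * δ ≤ (play tb f1 f2 v0 n).pay1 ∧
      j ≤ n ∧ n ≤ j + N * fc (play tb f1 f2 v0 n) ∧
      ∃ p pre : List V, p ≠ [] ∧ p.getLast? = some chead ∧ pre ++ rem = p ++ tailc ∧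
        pre.length = j ∧
        ∀ i < j, visit tb f1 f2 v0 (n - j + i + 1) = (p ++ tailc).getD i v0

lemma master (G : BiddingGame V) (plan : V → List V) (chead : V) (tailc : List V)
    (N : ℕ) (δ B : ℝ) (nxt : V → V)
    (hplan : ∀ x, ∃ p, p ≠ [] ∧ p.getLast? = some chead ∧ plan x = p ++ tailc)
    (hchainp : ∀ x, List.Chain G.E x (plan x))
    (hlen : ∀ x, (plan x).length ≤ N)
    (hδpos : 0 < δ) (hδN : δ * 2 ^ N ≤ B)
    (tb : TieBreak V) (f1 : Strat V) (v0 : V) :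
    ∀ n, InvState G chead tailc N δ B tb f1 (f2def plan δ nxt) v0 n
      (stf plan (play tb f1 (f2def plan δ nxt) v0 n)) := by
  set f2 := f2def plan δ nxt with hf2
  have hplan_ne : ∀ x, plan x ≠ [] := by
    intro x
    obtain ⟨p, hp0, -, hpe⟩ := hplan x
    simp [hpe, hp0]
  intro n
  induction n with
  | zero =>
      have hst : stf plan (play tb f1 f2 v0 0) = some (0, plan v0) := by
        simp [stf, play]
      rw [hst]
      obtain ⟨p, hp0, hpl, hpe⟩ := hplan v0
      refine ⟨hplan_ne v0, ?_, by simpa using hlen v0, by simp [play, Hist.pay1, fc], by omega,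
        by simp, p, [], hp0, hpl, by simp [hpe], rfl, by omega⟩
      show List.Chain G.E (Hist.cur ⟨v0, []⟩) (plan v0)
      simpa [Hist.cur] using hchainp v0
  | succ n ih =>
      have hplay : play tb f1 f2 v0 (n + 1) = extend tb f1 f2 (play tb f1 f2 v0 n) := rfl
      set h := play tb f1 f2 v0 n with hh
      rcases hst : stf plan h with _ | ⟨j, rem⟩
      · -- done state: carries over
        rw [hst] at ih
        obtain ⟨hbud, m, hm⟩ := ih
        rw [← hh] at hbud
        have hf2h : f2 h = (0, nxt h.cur) := by rw [hf2]; unfold f2def; rw [hst]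
        by_cases hw : P1W tb f1 f2 h
        · have he : play tb f1 f2 v0 (n+1) = ⟨h.init, h.rounds ++ [⟨(f1 h).2, (f1 h).1, true⟩]⟩ :=
            hplay.trans (extend_pos hw)
          have hst' : stf plan (play tb f1 f2 v0 (n+1)) = none := by
            rw [he, stf_concat]
            have : (⟨h.init, h.rounds⟩ : Hist V) = h := rfl
            rw [this, hst]; rfl
          rw [hst']
          have hpos : 0 ≤ (f1 h).1 := by
            rcases hw with hw | ⟨hw, -⟩
            · rw [hf2h] at hw; exact le_of_lt hw
            · rw [hf2h] at hw; exact le_of_eq hw.symm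
          refine ⟨?_, m, hm⟩
          rw [he, pay1_concat]
          simp only [if_pos]
          have : Hist.pay1 ⟨h.init, h.rounds⟩ = h.pay1 := rfl
          rw [this]
          linarith
        · have he : play tb f1 f2 v0 (n+1) = ⟨h.init, h.rounds ++ [⟨(f2 h).2, (f2 h).1, false⟩]⟩ :=
            hplay.trans (extend_neg hw)
          have hst' : stf plan (play tb f1 f2 v0 (n+1)) = none := by
            rw [he, stf_concat]
            have : (⟨h.init, h.rounds⟩ : Hist V) = h := rfl
            rw [this, hst]; rfl
          rw [hst']
          refine ⟨?_, m, hm⟩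
          rw [he, pay1_concat]
          have : Hist.pay1 ⟨h.init, h.rounds⟩ = h.pay1 := rfl
          rw [this]
          simp [hf2h]
          linarith
      · -- running state
        rw [hst] at ih
        obtain ⟨hrne, hch, hjlen, hpay, hjn, hnN, p, pre, hp0, hpl, hsplit, hprel, hanch⟩ := ih
        rw [← hh] at hch hpay hnN
        obtain ⟨a, rest, rfl⟩ : ∃ a rest, rem = a :: rest := by
          cases rem with
          | nil => exact absurd rfl hrne
          | cons a rest => exact ⟨a, rest, rfl⟩
        have hf2h : f2 h = (δ * 2 ^ j, a) := by
          rw [hf2]; unfold f2def; rw [hst]; rfl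
        have hjN : j + 1 ≤ N := by simp at hjlen; omega
        have h2pow : (2:ℝ) ^ (j+1) ≤ 2 ^ N := by
          exact pow_le_pow_right₀ one_le_two hjN
        have hfc0 : (0:ℝ) ≤ (fc h : ℝ) := Nat.cast_nonneg _
        have hpow0 : (0:ℝ) < 2 ^ j := by positivity
        by_cases hw : P1W tb f1 f2 h
        · -- Player 1 wins: restart
          have he : play tb f1 f2 v0 (n+1) = ⟨h.init, h.rounds ++ [⟨(f1 h).2, (f1 h).1, true⟩]⟩ :=
            hplay.trans (extend_pos hw)
          have hst' : stf plan (play tb f1 f2 v0 (n+1)) = some (0, plan (f1 h).2) := by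
            rw [he, stf_concat]
            have : (⟨h.init, h.rounds⟩ : Hist V) = h := rfl
            rw [this, hst]; rfl
          rw [hst']
          have hbid : δ * 2 ^ j ≤ (f1 h).1 := by
            rcases hw with hw | ⟨hw, -⟩
            · rw [hf2h] at hw; exact le_of_lt hw
            · rw [hf2h] at hw; exact le_of_eq hw.symm
          have hpay' : (play tb f1 f2 v0 (n+1)).pay1 = h.pay1 + (f1 h).1 := by
            rw [he, pay1_concat]; simp
          have hfc' : fc (play tb f1 f2 v0 (n+1)) = fc h + 1 := by
            rw [he, fc_concat]; simp
          have hcur' : (play tb f1 f2 v0 (n+1)).cur = (f1 h).2 := by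
            rw [he, cur_concat]
          obtain ⟨p', hp'0, hp'l, hp'e⟩ := hplan (f1 h).2
          refine ⟨hplan_ne _, by rw [hcur']; exact hchainp _, by simpa using hlen _, ?_, by omega,
            ?_, p', [], hp'0, hp'l, by simp [hp'e], rfl, by omega⟩
          · rw [hpay', hfc']
            push_cast
            nlinarith
          · rw [hfc']
            have hmul : N * (fc h + 1) = N * fc h + N := Nat.mul_succ N _
            omega
        · -- Player 2 wins: advance
          have he : play tb f1 f2 v0 (n+1) = ⟨h.init, h.rounds ++ [⟨(f2 h).2, (f2 h).1, false⟩]⟩ :=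
            hplay.trans (extend_neg hw)
          have hpay' : (play tb f1 f2 v0 (n+1)).pay1 = h.pay1 - δ * 2 ^ j := by
            rw [he, pay1_concat]; simp [hf2h]; ring
          have hfc' : fc (play tb f1 f2 v0 (n+1)) = fc h := by
            rw [he, fc_concat]; simp
          have hcur' : (play tb f1 f2 v0 (n+1)).cur = a := by
            rw [he, cur_concat]; simp [hf2h]
          have hvis : visit tb f1 f2 v0 (n+1) = a := hcur'
          rcases eq_or_ne rest [] with rfl | hrest
          · -- success!
            have hst' : stf plan (play tb f1 f2 v0 (n+1)) = none := by
              rw [he, stf_concat]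
              have : (⟨h.init, h.rounds⟩ : Hist V) = h := rfl
              rw [this, hst]
              simp [upd, hf2h]
            rw [hst']
            constructor
            · rw [hpay']
              have hps : (2:ℝ) ^ (j+1) = 2 ^ j * 2 := pow_succ 2 j
              nlinarith
            · -- produce m
              have hfull : pre ++ [a] = p ++ tailc := hsplit
              have hlenfull : pre.length + 1 = p.length + tailc.length := by
                have := congrArg List.length hfull
                simpa using this
              have hplen : 1 ≤ p.length := List.length_pos_iff.mpr hp0
              have hanch' : ∀ i < j + 1,
                  visit tb f1 f2 v0 (n - j + i + 1) = (p ++ tailc).getD i v0 := by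
                intro i hi
                rcases Nat.lt_or_ge i j with hij | hij
                · exact hanch i hij
                · have hij' : i = j := by omega
                  rw [hij']
                  have hn1 : n - j + j + 1 = n + 1 := by omega
                  rw [hn1, hvis, ← hfull]
                  rw [List.getD_append_right _ _ _ _ (le_of_eq hprel)]
                  simp [hprel]
              refine ⟨n - j + p.length, ?_⟩
              intro i hi
              rcases Nat.eq_zero_or_pos i with rfl | hipos
              · have hidx : p.length - 1 < j + 1 := by omega
                have := hanch' (p.length - 1) hidx
                have hmi : n - j + p.length + 0 = n - j + (p.length - 1) + 1 := by omega
                rw [hmi, this]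
                rw [List.getD_append _ _ _ _ (by omega)]
                have hgl : p.getLast hp0 = chead := by
                  have := List.getLast?_eq_getLast hp0
                  rw [this] at hpl
                  exact Option.some.inj hpl
                rw [List.getD_eq_getElem _ _ (by omega)]
                rw [← List.getLast_eq_getElem hp0]
                exact hgl
              · obtain ⟨i', rfl⟩ : ∃ i', i = i' + 1 := ⟨i - 1, by omega⟩
                have hidx : p.length + i' < j + 1 := by omega
                have := hanch' (p.length + i') hidx
                have hmi : n - j + p.length + (i' + 1) = n - j + (p.length + i') + 1 := by omega
                rw [hmi, this]
                rw [List.getD_append_right _ _ _ _ (by omega)]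
                simp
          · -- continue run
            have hrlen : ¬ ((a :: rest).length ≤ 1) := by
              have := List.length_pos_iff.mpr hrest
              simp only [List.length_cons]
              omega
            have hst' : stf plan (play tb f1 f2 v0 (n+1)) = some (j + 1, rest) := by
              rw [he, stf_concat]
              have : (⟨h.init, h.rounds⟩ : Hist V) = h := rfl
              rw [this, hst]
              simp [upd, hf2h, hrlen, hrest]
            rw [hst']
            have hch' := (List.chain_cons.mp hch).2
            have hjlen' : j + (rest.length + 1) ≤ N := by simpa using hjlen
            refine ⟨hrest, by rw [hcur']; exact hch', by omega, ?_,
              by omega, by rw [hfc']; omega, p, pre ++ [a], hp0, hpl, ?_, by simp [hprel], ?_⟩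
            · rw [hpay', hfc']
              have hps : (2:ℝ) ^ (j+1) = 2 ^ j * 2 := pow_succ 2 j
              nlinarith
            · rw [← hsplit]; simp
            · intro i hi
              have hn1 : n + 1 - (j + 1) = n - j := by omega
              rw [hn1]
              rcases Nat.lt_or_ge i j with hij | hij
              · exact hanch i hij
              · have hij' : i = j := by omega
                rw [hij']
                have hn2 : n - j + j + 1 = n + 1 := by omega
                rw [hn2, hvis, ← hsplit]
                rw [List.getD_append_right _ _ _ _ (le_of_eq hprel)]
                simp [hprel]

lemma legal2 (G : BiddingGame V) (plan : V → List V) (chead : V) (tailc : List V)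
    (N : ℕ) (δ B : ℝ) (nxt : V → V)
    (hplan : ∀ x, ∃ p, p ≠ [] ∧ p.getLast? = some chead ∧ plan x = p ++ tailc)
    (hchainp : ∀ x, List.Chain G.E x (plan x))
    (hlen : ∀ x, (plan x).length ≤ N)
    (hδpos : 0 < δ) (hδN : δ * 2 ^ N ≤ B)
    (hnxt : ∀ x, G.E x (nxt x)) :
    Legal2 G (f2def plan δ nxt) B := by
  intro tb f1 v0 n
  have hInv := master G plan chead tailc N δ B nxt hplan hchainp hlen hδpos hδN tb f1 v0 n
  set h := play tb f1 (f2def plan δ nxt) v0 n with hh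
  have hpay2 : B - h.pay2 = B + h.pay1 := by simp [Hist.pay2]
  rcases hst : stf plan h with _ | ⟨j, rem⟩
  · rw [hst] at hInv
    obtain ⟨hbud, -⟩ := hInv
    rw [← hh] at hbud
    have hf2h : f2def plan δ nxt h = (0, nxt h.cur) := by unfold f2def; rw [hst]
    rw [hf2h, hpay2]
    exact ⟨le_refl 0, hbud, hnxt _⟩
  · rw [hst] at hInv
    obtain ⟨hrne, hch, hjlen, hpay, -⟩ := hInv
    rw [← hh] at hch hpay
    obtain ⟨a, rest, rfl⟩ : ∃ a rest, rem = a :: rest := by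
      cases rem with
      | nil => exact absurd rfl hrne
      | cons a rest => exact ⟨a, rest, rfl⟩
    have hf2h : f2def plan δ nxt h = (δ * 2 ^ j, a) := by
      unfold f2def; rw [hst]; rfl
    rw [hf2h, hpay2]
    have hjN : j + 1 ≤ N := by simp at hjlen; omega
    have h2pow : (2:ℝ) ^ (j+1) ≤ 2 ^ N := pow_le_pow_right₀ one_le_two hjN
    have hps : (2:ℝ) ^ (j+1) = 2 ^ j * 2 := pow_succ 2 j
    have hfc0 : (0:ℝ) ≤ (fc h : ℝ) := Nat.cast_nonneg _
    have hpow0 : (0:ℝ) < 2 ^ j := by positivity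
    have hkey : δ * (2 ^ j * 2) ≤ δ * 2 ^ N := by
      rw [← hps]; exact mul_le_mul_of_nonneg_left h2pow hδpos.le
    have hfcδ : 0 ≤ (fc h : ℝ) * δ := mul_nonneg hfc0 hδpos.le
    refine ⟨by positivity, ?_, (List.chain_cons.mp hch).1⟩
    show δ * 2 ^ j ≤ B + h.pay1
    linarith

lemma pay1_le (G : BiddingGame V) (f1 f2 : Strat V) (B : ℝ) (hB1 : B ≤ 1)
    (hL1 : Legal1 G f1 (1 - B)) (hbid2 : ∀ h, 0 ≤ (f2 h).1)
    (tb : TieBreak V) (v0 : V) :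
    ∀ n, (play tb f1 f2 v0 n).pay1 ≤ 1 - B := by
  intro n
  induction n with
  | zero => simp [play, Hist.pay1]; linarith
  | succ n ih =>
      have hplay : play tb f1 f2 v0 (n + 1) = extend tb f1 f2 (play tb f1 f2 v0 n) := rfl
      set h := play tb f1 f2 v0 n with hh
      by_cases hw : P1W tb f1 f2 h
      · have he : play tb f1 f2 v0 (n+1) = ⟨h.init, h.rounds ++ [⟨(f1 h).2, (f1 h).1, true⟩]⟩ :=
          hplay.trans (extend_pos hw)
        have hb1 := (hL1 tb f2 v0 n).2.1
        rw [← hh] at hb1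
        rw [he, pay1_concat]
        have : Hist.pay1 ⟨h.init, h.rounds⟩ = h.pay1 := rfl
        rw [this]
        simp only [if_pos]
        linarith
      · have he : play tb f1 f2 v0 (n+1) = ⟨h.init, h.rounds ++ [⟨(f2 h).2, (f2 h).1, false⟩]⟩ :=
          hplay.trans (extend_neg hw)
        rw [he, pay1_concat]
        have : Hist.pay1 ⟨h.init, h.rounds⟩ = h.pay1 := rfl
        rw [this]
        have := hbid2 h
        simp only [if_neg Bool.false_ne_true]
        linarith

lemma reach_done (G : BiddingGame V) (plan : V → List V) (chead : V) (tailc : List V)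
    (N : ℕ) (δ B : ℝ) (nxt : V → V)
    (hplan : ∀ x, ∃ p, p ≠ [] ∧ p.getLast? = some chead ∧ plan x = p ++ tailc)
    (hchainp : ∀ x, List.Chain G.E x (plan x))
    (hlen : ∀ x, (plan x).length ≤ N)
    (hδpos : 0 < δ) (hδN : δ * 2 ^ N ≤ B) (hB1 : B ≤ 1)
    (tb : TieBreak V) (f1 : Strat V) (v0 : V)
    (hL1 : Legal1 G f1 (1 - B)) :
    ∃ n, stf plan (play tb f1 (f2def plan δ nxt) v0 n) = none := by
  set Fb := Nat.ceil ((1:ℝ) / δ) with hFb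
  set n := N * (Fb + 1) + N with hn
  refine ⟨n, ?_⟩
  rcases hst : stf plan (play tb f1 (f2def plan δ nxt) v0 n) with _ | ⟨j, rem⟩
  · rfl
  · exfalso
    have hInv := master G plan chead tailc N δ B nxt hplan hchainp hlen hδpos hδN tb f1 v0 n
    rw [hst] at hInv
    obtain ⟨hrne, -, hjlen, hpay, hjn, hnN, -⟩ := hInv
    have hple := pay1_le G f1 (f2def plan δ nxt) B hB1 hL1
      (f2bid_nonneg plan (le_of_lt hδpos) nxt) tb v0 n
    have hrem1 : 1 ≤ rem.length := List.length_pos_iff.mpr hrne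
    have hjN : j + 1 ≤ N := by omega
    have h2pow : (2:ℝ) ^ j ≤ 2 ^ N := pow_le_pow_right₀ one_le_two (by omega)
    set F2 := fc (play tb f1 (f2def plan δ nxt) v0 n) with hF2
    -- (F2:ℝ) * δ ≤ 1
    have hf1 : (F2 : ℝ) * δ ≤ 1 := by nlinarith
    have hf2 : (F2 : ℝ) ≤ 1 / δ := by
      rw [le_div_iff₀ hδpos]; exact hf1
    have hf3 : F2 ≤ Fb := by
      have : (F2 : ℝ) ≤ (Fb : ℝ) := le_trans hf2 (Nat.le_ceil _)
      exact_mod_cast this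
    have hmul : N * (Fb + 1) = N * Fb + N := Nat.mul_succ N _
    have hmono : N * F2 ≤ N * Fb := Nat.mul_le_mul_left N hf3
    omega

/-- the cycle repeated `k` times -/
def cyc (c : List V) : ℕ → List V
  | 0 => []
  | k + 1 => c ++ cyc c k

lemma cyc_length (c : List V) : ∀ k, (cyc c k).length = k * c.length := by
  intro k
  induction k with
  | zero => simp [cyc]
  | succ k ih => simp [cyc, ih, Nat.succ_mul]; ring

lemma cyc_getD (c : List V) (d : V) :
    ∀ k jj, jj < k * c.length → (cyc c k).getD jj d = c.getD (jj % c.length) d := by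
  intro k
  induction k with
  | zero => intro jj h; simp at h
  | succ k ih =>
      intro jj h
      have hlen : 0 < c.length := by
        by_contra hl
        simp at hl
        simp [hl] at h
      rcases Nat.lt_or_ge jj c.length with hj | hj
      · rw [show cyc c (k+1) = c ++ cyc c k from rfl,
          List.getD_append _ _ _ _ hj, Nat.mod_eq_of_lt hj]
      · rw [show cyc c (k+1) = c ++ cyc c k from rfl,
          List.getD_append_right _ _ _ _ hj,
          ih _ (by rw [Nat.succ_mul] at h; omega),
          ← Nat.mod_eq_sub_mod hj]

lemma cyc_chain' {E : V → V → Prop} (c : List V) (hc : c ≠ []) (hchain : List.Chain' E c)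
    (hcycle : E (c.getLast hc) (c.head hc)) : ∀ k, List.Chain' E (cyc c k) := by
  intro k
  induction k with
  | zero => simp [cyc]; exact List.isChain_nil
  | succ k ih =>
      rw [show cyc c (k+1) = c ++ cyc c k from rfl]
      refine List.isChain_append.mpr ⟨hchain, ih, ?_⟩
      intro x hx y hy
      rw [List.getLast?_eq_getLast hc] at hx
      simp at hx
      subst hx
      cases k with
      | zero => simp [cyc] at hy
      | succ k =>
          rw [show cyc c (k+1) = c ++ cyc c k from rfl] at hy
          cases c with
          | nil => exact absurd rfl hc
          | cons a t =>
              simp at hy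
              subst hy
              exact hcycle

lemma cyc_cons (c : List V) (hc : c ≠ []) (k : ℕ) (hk : 1 ≤ k) :
    cyc c k = c.head hc :: (cyc c k).tail := by
  cases k with
  | zero => omega
  | succ k =>
      cases c with
      | nil => exact absurd rfl hc
      | cons a t => rfl

/-- gluing chains -/
lemma chain_append_glue {E : V → V → Prop} :
    ∀ (l : List V) (x z : V) (q : List V), List.Chain E x l →
      (x :: l).getLast (List.cons_ne_nil _ _) = z → List.Chain E z q →
      List.Chain E x (l ++ q) := by
  intro l
  induction l with
  | nil =>
      intro x z q _ hlast hq
      simp at hlast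
      subst hlast
      simpa using hq
  | cons b l' ih =>
      intro x z q hl hlast hq
      obtain ⟨hxb, hbl⟩ := List.chain_cons.mp hl
      rw [List.getLast_cons_cons] at hlast
      exact List.chain_cons.mpr ⟨hxb, ih b z q hbl hlast hq⟩

end BPaux


/-- In a strongly-connected Büchi bidding game with accepting vertices
`F`, if there is a cycle `c` avoiding `F`, then for every `k` and every strictly
positive initial budget, Player 2 has a strategy forcing the token to traverse the
cycle `c` for `k` consecutive times without visiting `F`; in particular no accepting
vertex is visited for at least `k` rounds. -/
theorem buchi_no_prompt_winning
    {V : Type} [Fintype V] (G : BiddingGame V) (F : Set V)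
    (hsc : StronglyConnected G)
    (c : List V) (hc : c ≠ []) (hchain : List.Chain' G.E c)
    (hcycle : G.E (c.getLast hc) (c.head hc)) (hF : ∀ x ∈ c, x ∉ F)
    (k : ℕ) (B : ℝ) (hB0 : 0 < B) (hB1 : B ≤ 1) (v : V) (tb : TieBreak V) :
    ∃ f2 : Strat V, Legal2 G f2 B ∧
      ∀ f1 : Strat V, Legal1 G f1 (1 - B) →
        ∃ m : ℕ,
          (∀ j < k * c.length, visit tb f1 f2 v (m + j) = c.getD (j % c.length) v) ∧
          (∀ j < k, visit tb f1 f2 v (m + j) ∉ F) := by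
  classical
  set chead := c.head hc with hchead
  set tailc := (BPaux.cyc c k).tail with htailcdef
  have hclen : 0 < c.length := List.length_pos_iff.mpr hc
  -- chain around the cycle, from the head back to the head
  have hq : List.Chain G.E chead (c.tail ++ [chead]) := by
    have h1 : List.Chain' G.E (c ++ [chead]) := by
      refine List.isChain_append.mpr ⟨hchain, by simp, ?_⟩
      intro x hx y hy
      rw [List.getLast?_eq_getLast hc] at hx
      simp at hx hy
      subst hx
      subst hy
      exact hcycle
    have h2 : c ++ [chead] = chead :: (c.tail ++ [chead]) := by
      conv_lhs => rw [← List.cons_head_tail hc]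
      rfl
    rw [h2] at h1
    exact h1
  -- paths to the head of the cycle
  have hpth : ∀ x : V, ∃ p : List V, p ≠ [] ∧ p.getLast? = some chead ∧
      List.Chain G.E x p := by
    intro x
    obtain ⟨l, hl, hlast⟩ := List.exists_isChain_cons_of_relationReflTransGen (hsc x chead)
    refine ⟨l ++ (c.tail ++ [chead]), by simp, ?_, ?_⟩
    · rw [← List.append_assoc]
      simp
    · exact BPaux.chain_append_glue l x chead _ hl hlast hq
  choose pth hpth0 hpthl hpthc using hpth
  have htailc : List.Chain G.E chead tailc := by
    rcases Nat.eq_zero_or_pos k with rfl | hk1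
    · rw [htailcdef]
      exact List.Chain.nil
    · have hcons := BPaux.cyc_cons c hc k hk1
      have hch' := BPaux.cyc_chain' c hc hchain hcycle k
      rw [hcons] at hch'
      exact hch'
  set plan : V → List V := fun x => pth x ++ tailc with hplandef
  have hplan : ∀ x, ∃ p, p ≠ [] ∧ p.getLast? = some chead ∧ plan x = p ++ tailc :=
    fun x => ⟨pth x, hpth0 x, hpthl x, rfl⟩
  have hgl : ∀ x, (x :: pth x).getLast (List.cons_ne_nil _ _) = chead := by
    intro x
    rw [List.getLast_cons (hpth0 x)]
    have h2 := hpthl x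
    rw [List.getLast?_eq_getLast (hpth0 x)] at h2
    exact Option.some.inj h2
  have hchainp : ∀ x, List.Chain G.E x (plan x) :=
    fun x => BPaux.chain_append_glue (pth x) x chead tailc (hpthc x) (hgl x) htailc
  set N : ℕ := Finset.univ.sup (fun x : V => (plan x).length) with hNdef
  have hlen : ∀ x, (plan x).length ≤ N := by
    intro x
    rw [hNdef]
    exact Finset.le_sup (f := fun x : V => (plan x).length) (Finset.mem_univ x)
  set δ : ℝ := B / 2 ^ N with hδdef
  have hδpos : 0 < δ := by positivity
  have hδN : δ * 2 ^ N ≤ B := le_of_eq (div_mul_cancel₀ B (by positivity))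
  set nxt : V → V := fun x => Classical.choose (G.total x) with hnxtdef
  have hnxt : ∀ x, G.E x (nxt x) := fun x => Classical.choose_spec (G.total x)
  refine ⟨BPaux.f2def plan δ nxt,
    BPaux.legal2 G plan chead tailc N δ B nxt hplan hchainp hlen hδpos hδN hnxt, ?_⟩
  intro f1 hf1
  obtain ⟨n, hn⟩ := BPaux.reach_done G plan chead tailc N δ B nxt hplan hchainp hlen
    hδpos hδN hB1 tb f1 v hf1
  have hInv := BPaux.master G plan chead tailc N δ B nxt hplan hchainp hlen hδpos hδN tb f1 v n
  rw [hn] at hInv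
  obtain ⟨-, m, hm⟩ := hInv
  rcases Nat.eq_zero_or_pos k with rfl | hk1
  · refine ⟨0, ?_, ?_⟩ <;> intro j hj <;> simp at hj
  · have hcons := BPaux.cyc_cons c hc k hk1
    rw [← htailcdef, ← hchead] at hcons
    have hlen' : tailc.length + 1 = k * c.length := by
      have hlc := BPaux.cyc_length c k
      rw [hcons] at hlc
      simpa using hlc
    have hvisit : ∀ j < k * c.length,
        visit tb f1 (BPaux.f2def plan δ nxt) v (m + j) = c.getD (j % c.length) v := by
      intro j hj
      have h1 := hm j (by omega)
      rw [← hcons] at h1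
      rw [BPaux.cyc_getD c v k j hj] at h1
      exact h1
    refine ⟨m, hvisit, ?_⟩
    intro j hjk
    have hjlen : j < k * c.length := lt_of_lt_of_le hjk (Nat.le_mul_of_pos_right k hclen)
    rw [hvisit j hjlen]
    have hmod : j % c.length < c.length := Nat.mod_lt _ hclen
    rw [List.getD_eq_getElem _ _ hmod]
    exact hF _ (List.getElem_mem _)
end

section
/- Consider a strongly-connected mean-payoff bidding game G = (V, E, w), a vertex u ∈ V, and N ∈ ℕ, and let f_m be the Min strategy that at every vertex v bids (W(v⁺) − W(v⁻))/(2N) and moves to v⁻ upon winning. For every Max strategy f_M and every finite outcome π of (f_m, f_M) that, regarded as a path in G^u, starts in a vertex v and ends in a vertex v', it holds that W(v) − W(v') ≥ E(π) + N · B_m(π). -/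
open scoped Classical

lemma aux_cur_append {V : Type} (init : V) (l : List (BidRound V)) (r : BidRound V) :
    (Hist.mk init (l ++ [r])).cur = r.dest := by
  simp [Hist.cur]

lemma aux_pay1_append {V : Type} (init : V) (l : List (BidRound V)) (r : BidRound V) :
    (Hist.mk init (l ++ [r])).pay1
      = (Hist.mk init l).pay1 + (if r.p1Won then r.bid else -r.bid) := by
  simp [Hist.pay1]

/-- Let `f1` be the Min strategy that at every vertex `v` bids
`(W(v⁺) - W(v⁻)) / (2N)` and moves to `v⁻` upon winning (where `v⁺, v⁻` are the
`G^u`-successors maximizing/minimizing `W`). Then for every Max strategy `f2`, every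
finite outcome `π` of `(f1, f2)` that, regarded as a path in `G^u`, starts in `v0` and
ends in `v'` (i.e., does not pass through `u` strictly in between; the final vertex is
`u_t` if it is `u`, the initial vertex is `u_s` if it is `u`) satisfies
`W(v0) - W(v') ≥ E(π) + N · B_m(π)`. -/
theorem mp_min_energy_budget_lemma
    {V : Type} [Fintype V] (G : BiddingGame V) (w : V → ℤ)
    (hsc : StronglyConnected G) (u : V)
    (Wf : V ⊕ Unit → ℝ) (hW : IsWRichman G (fun x => (w x : ℝ)) u Wf)
    (N : ℕ) (hN : 0 < N)
    (f1 : Strat V)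
    (hbid : ∀ h : Hist V,
      (f1 h).1 = (supWu G u Wf h.cur - infWu G u Wf h.cur) / (2 * N))
    (hmove : ∀ h : Hist V, ∃ y ∈ succu G u h.cur,
      Wf y = infWu G u Wf h.cur ∧ projU u y = (f1 h).2)
    (f2 : Strat V) (hf2 : ∀ h : Hist V, 0 ≤ (f2 h).1 ∧ G.E h.cur (f2 h).2)
    (tb : TieBreak V) (v0 : V) (n : ℕ)
    (hmid : ∀ i : ℕ, 0 < i → i < n → visit tb f1 f2 v0 i ≠ u) :
    Wf (Sum.inl v0) -
        (if 0 < n ∧ visit tb f1 f2 v0 n = u then Wf (Sum.inr ())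
         else Wf (Sum.inl (visit tb f1 f2 v0 n)))
      ≥ (energy w tb f1 f2 v0 n : ℝ) + N * (play tb f1 f2 v0 n).pay1 := by
  revert hmid
  induction n with
  | zero =>
    intro _
    simp [energy, play, visit, Hist.cur, Hist.pay1]
  | succ n ih =>
    intro hmid
    have IH0 := ih (fun i h1 h2 => hmid i h1 (h2.trans n.lt_succ_self))
    set h := play tb f1 f2 v0 n with hh
    have hcur : h.cur = visit tb f1 f2 v0 n := rfl
    set v := visit tb f1 f2 v0 n with hv
    have hvn : (if 0 < n ∧ v = u then Wf (Sum.inr ())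
         else Wf (Sum.inl v)) = Wf (Sum.inl v) := by
      rcases Nat.eq_zero_or_pos n with h0 | h0
      · simp [h0]
      · simp [hv, hmid n h0 n.lt_succ_self]
    rw [hvn] at IH0
    have hWv := hW.2 v
    have hNne : (N:ℝ) ≠ 0 := Nat.cast_ne_zero.mpr hN.ne'
    have hb1 : (N:ℝ) * (f1 h).1 = (supWu G u Wf v - infWu G u Wf v) / 2 := by
      rw [hbid h, hcur]
      field_simp
    have hE : (energy w tb f1 f2 v0 (n+1) : ℝ)
        = (energy w tb f1 f2 v0 n : ℝ) + (w v : ℝ) := by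
      simp only [energy, Finset.sum_range_succ, ← hv]
      push_cast
      ring
    by_cases hc : (f2 h).1 < (f1 h).1 ∨ ((f1 h).1 = (f2 h).1 ∧ tb h = true)
    · -- Min wins the bidding
      have hplay : play tb f1 f2 v0 (n+1)
          = ⟨h.init, h.rounds ++ [⟨(f1 h).2, (f1 h).1, true⟩]⟩ := by
        simp only [play, extend, ← hh]
        rw [if_pos hc]
      have hvis : visit tb f1 f2 v0 (n+1) = (f1 h).2 := by
        rw [visit, hplay]; exact aux_cur_append _ _ _
      have hpay : (play tb f1 f2 v0 (n+1)).pay1 = h.pay1 + (f1 h).1 := by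
        rw [hplay, aux_pay1_append]; simp
      obtain ⟨y, hy, hyW, hyproj⟩ := hmove h
      rw [hcur] at hy hyW
      have hW' : (if 0 < n+1 ∧ visit tb f1 f2 v0 (n+1) = u then Wf (Sum.inr ())
           else Wf (Sum.inl (visit tb f1 f2 v0 (n+1)))) = infWu G u Wf v := by
        rcases y with x | y
        · have hx : G.E v x ∧ x ≠ u := by
            simp only [succu, Finset.mem_filter, Finset.mem_univ, true_and] at hy
            exact hy
          have hvx : visit tb f1 f2 v0 (n+1) = x := by
            rw [hvis, ← hyproj]; rfl
          rw [if_neg (by rw [hvx]; exact fun hcon => hx.2 hcon.2), hvx, ← hyW]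
        · have hvx : visit tb f1 f2 v0 (n+1) = u := by
            rw [hvis, ← hyproj]; rfl
          rw [if_pos ⟨n.succ_pos, hvx⟩, ← hyW]
      rw [hW', hE, hpay]
      have hms : (N:ℝ) * (h.pay1 + (f1 h).1)
          = N * h.pay1 + (supWu G u Wf v - infWu G u Wf v) / 2 := by
        rw [mul_add, hb1]
      linarith [IH0]
    · -- Max wins the bidding
      have hle : (f1 h).1 ≤ (f2 h).1 := le_of_not_gt (fun hlt => hc (Or.inl hlt))
      have hplay : play tb f1 f2 v0 (n+1)
          = ⟨h.init, h.rounds ++ [⟨(f2 h).2, (f2 h).1, false⟩]⟩ := by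
        simp only [play, extend, ← hh]
        rw [if_neg hc]
      have hvis : visit tb f1 f2 v0 (n+1) = (f2 h).2 := by
        rw [visit, hplay]; exact aux_cur_append _ _ _
      have hpay : (play tb f1 f2 v0 (n+1)).pay1 = h.pay1 - (f2 h).1 := by
        rw [hplay, aux_pay1_append]; simp; ring
      have hEdge : G.E v (f2 h).2 := hcur ▸ (hf2 h).2
      have hWle : (if 0 < n+1 ∧ visit tb f1 f2 v0 (n+1) = u then Wf (Sum.inr ())
           else Wf (Sum.inl (visit tb f1 f2 v0 (n+1)))) ≤ supWu G u Wf v := by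
        by_cases hxu : (f2 h).2 = u
        · rw [if_pos ⟨n.succ_pos, by rw [hvis, hxu]⟩]
          apply Finset.le_sup'
          simp only [succu, Finset.mem_filter, Finset.mem_univ, true_and]
          exact show G.E v u from hxu ▸ hEdge
        · rw [if_neg (by rw [hvis]; exact fun hcon => hxu hcon.2), hvis]
          apply Finset.le_sup'
          simp only [succu, Finset.mem_filter, Finset.mem_univ, true_and]
          exact show G.E v (f2 h).2 ∧ (f2 h).2 ≠ u from ⟨hEdge, hxu⟩
      have hNb : (supWu G u Wf v - infWu G u Wf v) / 2 ≤ (N:ℝ) * (f2 h).1 := by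
        rw [← hb1]
        exact mul_le_mul_of_nonneg_left hle (by positivity)
      rw [hE, hpay]
      have hms : (N:ℝ) * (h.pay1 - (f2 h).1) = N * h.pay1 - N * (f2 h).1 := by ring
      linarith [IH0]
end

section
/- Consider a strongly-connected mean-payoff bidding game G = (V, E, w) with a vertex u such that W(u) ≤ 0, with the game starting at u with initial energy level k_I ∈ ℕ. Let w_M = max_{v ∈ V} |W(v)|, let b_M = max_{v ∈ V} (W(v⁺) − W(v⁻))/2, and suppose N ∈ ℕ and Min's initial budget B satisfy B > (k_I + b_M + w_M)/N. Let f_m be the Min strategy that at every vertex v bids (W(v⁺) − W(v⁻))/(2N) and moves to v⁻ upon winning. Then for every Max strategy f_M and every finite outcome π of (f_m, f_M): if the energy level at the end of π is k = k_I + E(π), then Min's budget at the end of π is at least (k + b_M)/N. In particular, f_m is legal (Min can always afford his bid), and if the energy level never reaches 0 then it stays bounded by N − b_M. -/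
open scoped Classical

/-- Suppose `W(u) ≤ 0`, the game starts at `u` with initial energy
level `kI`, and Min's initial budget `B` satisfies `B > (kI + b_M + w_M) / N`. Let `f1`
be the Min strategy that at every vertex `v` bids `(W(v⁺) - W(v⁻)) / (2N)` and moves to
`v⁻` upon winning. Then against every legal Max strategy: whenever the energy level is
`k = kI + E(π)`, Min's current budget is at least `(k + b_M) / N`; in particular `f1`
is legal (Min can always afford his bid, the energy level being nonnegative), and if
the energy level never reaches `0`, it stays bounded by `N - b_M`. -/
theorem mp_min_invariant
    {V : Type} [Fintype V] (G : BiddingGame V) (w : V → ℤ)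
    (hsc : StronglyConnected G) (u : V)
    (Wf : V ⊕ Unit → ℝ) (hW : IsWRichman G (fun x => (w x : ℝ)) u Wf)
    (hWu : Wf (Sum.inl u) ≤ 0)
    (kI : ℕ) (N : ℕ) (hN : 0 < N) (B : ℝ) (hB1 : B ≤ 1)
    (hB : ((kI : ℝ) + bMax G u Wf + wMax Wf u) / N < B)
    (f1 : Strat V)
    (hbid : ∀ h : Hist V,
      (f1 h).1 = (supWu G u Wf h.cur - infWu G u Wf h.cur) / (2 * N))
    (hmove : ∀ h : Hist V, ∃ y ∈ succu G u h.cur,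
      Wf y = infWu G u Wf h.cur ∧ projU u y = (f1 h).2)
    (f2 : Strat V) (hf2 : Legal2 G f2 (1 - B)) (tb : TieBreak V) :
    (∀ n : ℕ, ((kI : ℝ) + (energy w tb f1 f2 u n : ℝ) + bMax G u Wf) / N
        ≤ B - (play tb f1 f2 u n).pay1) ∧
    (∀ n : ℕ, 0 ≤ (kI : ℤ) + energy w tb f1 f2 u n →
        (f1 (play tb f1 f2 u n)).1 ≤ B - (play tb f1 f2 u n).pay1) ∧
    ((∀ m : ℕ, (kI : ℤ) + energy w tb f1 f2 u m ≠ 0) →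
      ∀ n : ℕ, (kI : ℝ) + (energy w tb f1 f2 u n : ℝ) ≤ N - bMax G u Wf) := by
  have hN' : (0:ℝ) < N := by exact_mod_cast hN
  have hW0 : Wf (Sum.inr ()) = 0 := hW.1
  have hIS : ∀ v, infWu G u Wf v ≤ supWu G u Wf v := by
    intro v
    obtain ⟨y, hy⟩ := succu_nonempty G u v
    exact le_trans (Finset.inf'_le _ hy) (Finset.le_sup' _ hy)
  have hbM : ∀ v, (supWu G u Wf v - infWu G u Wf v) / 2 ≤ bMax G u Wf := by
    intro v
    exact Finset.le_sup' (fun v : V => (supWu G u Wf v - infWu G u Wf v) / 2)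
      (Finset.mem_univ v)
  have hbM0 : (0:ℝ) ≤ bMax G u Wf := le_trans (by linarith [hIS u]) (hbM u)
  have hwM : ∀ v : V, |Wf (Sum.inl v)| ≤ wMax Wf u := by
    intro v
    exact Finset.le_sup' (fun v : V => |Wf (Sum.inl v)|) (Finset.mem_univ v)
  have hwM0 : (0:ℝ) ≤ wMax Wf u := le_trans (abs_nonneg _) (hwM u)
  have hedge : ∀ v x : V, G.E v x → Wf (Sum.inl x) ≤ supWu G u Wf v := by
    intro v x hx
    by_cases hxu : x = u
    · subst hxu
      refine hWu.trans ?_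
      rw [← hW0]
      exact Finset.le_sup' Wf (by simp only [succu, Finset.mem_filter, Finset.mem_univ, true_and]; exact hx)
    · exact Finset.le_sup' Wf (by simp only [succu, Finset.mem_filter, Finset.mem_univ, true_and]; exact ⟨hx, hxu⟩)
  have hminmove : ∀ h : Hist V, Wf (Sum.inl (f1 h).2) ≤ infWu G u Wf h.cur := by
    intro h
    obtain ⟨y, hy, hyW, hyp⟩ := hmove h
    cases y with
    | inl x =>
      simp only [projU, Sum.elim_inl, id] at hyp
      rw [← hyp, hyW]
    | inr _ =>
      simp only [projU, Sum.elim_inr] at hyp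
      rw [← hyp, ← hyW, hW0]
      exact hWu
  -- the key invariant
  have key : ∀ n : ℕ,
      ((kI : ℝ) + (energy w tb f1 f2 u n : ℝ) + Wf (Sum.inl (visit tb f1 f2 u n))
        + bMax G u Wf + wMax Wf u) / N ≤ B - (play tb f1 f2 u n).pay1 := by
    intro n
    induction n with
    | zero =>
      have h0 : visit tb f1 f2 u 0 = u := rfl
      have h1 : (play tb f1 f2 u 0).pay1 = 0 := by simp [play, Hist.pay1]
      have h2 : energy w tb f1 f2 u 0 = 0 := by simp [energy]
      rw [h0, h1, h2, sub_zero]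
      refine le_trans ?_ hB.le
      push_cast
      rw [div_le_div_iff_of_pos_right hN']
      linarith
    | succ n ih =>
      have hE : energy w tb f1 f2 u (n+1)
          = energy w tb f1 f2 u n + w (visit tb f1 f2 u n) := by
        simp [energy, Finset.sum_range_succ]
      set h : Hist V := play tb f1 f2 u n with hh
      have hcur : h.cur = visit tb f1 f2 u n := rfl
      have hR : Wf (Sum.inl h.cur)
          = (supWu G u Wf h.cur + infWu G u Wf h.cur) / 2 + (w h.cur : ℝ) := hW.2 h.cur
      have hb1N : (f1 h).1 * N = (supWu G u Wf h.cur - infWu G u Wf h.cur) / 2 := by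
        rw [hbid h]; field_simp
      have ih' : (kI : ℝ) + (energy w tb f1 f2 u n : ℝ) + Wf (Sum.inl h.cur)
          + bMax G u Wf + wMax Wf u ≤ (B - h.pay1) * N := by
        rw [← hcur] at ih
        exact (div_le_iff₀ hN').mp ih
      by_cases hwin : (f2 h).1 < (f1 h).1 ∨ ((f1 h).1 = (f2 h).1 ∧ tb h = true)
      · have hplay : play tb f1 f2 u (n+1)
            = ⟨h.init, h.rounds ++ [⟨(f1 h).2, (f1 h).1, true⟩]⟩ := by
          show extend tb f1 f2 h = _
          rw [extend, if_pos hwin]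
        have hpay : (play tb f1 f2 u (n+1)).pay1 = h.pay1 + (f1 h).1 := by
          rw [hplay]; simp [Hist.pay1]
        have hvis : visit tb f1 f2 u (n+1) = (f1 h).2 := by
          rw [visit, hplay]; simp [Hist.cur]
        have hmm := hminmove h
        rw [hvis, hpay, hE, div_le_iff₀ hN']
        push_cast
        have hexp : (B - (h.pay1 + (f1 h).1)) * N = (B - h.pay1) * N - (f1 h).1 * N := by
          ring
        rw [hexp, hb1N]
        rw [hcur] at hR hmm ih' ⊢
        push_cast at hR ih' ⊢
        linarith
      · have hplay : play tb f1 f2 u (n+1)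
            = ⟨h.init, h.rounds ++ [⟨(f2 h).2, (f2 h).1, false⟩]⟩ := by
          show extend tb f1 f2 h = _
          rw [extend, if_neg hwin]
        have hpay : (play tb f1 f2 u (n+1)).pay1 = h.pay1 - (f2 h).1 := by
          rw [hplay]; simp [Hist.pay1]; ring
        have hvis : visit tb f1 f2 u (n+1) = (f2 h).2 := by
          rw [visit, hplay]; simp [Hist.cur]
        have hge : (f1 h).1 ≤ (f2 h).1 := by
          push_neg at hwin
          exact hwin.1
        have hEdge : G.E h.cur (f2 h).2 := (hf2 tb f1 u n).2.2
        have hsup := hedge _ _ hEdge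
        have hmul : (f1 h).1 * N ≤ (f2 h).1 * N :=
          mul_le_mul_of_nonneg_right hge hN'.le
        rw [hvis, hpay, hE, div_le_iff₀ hN']
        have hexp : (B - (h.pay1 - (f2 h).1)) * N = (B - h.pay1) * N + (f2 h).1 * N := by
          ring
        rw [hexp]
        rw [hb1N, hcur] at hmul
        rw [hcur] at hR hsup ih'
        push_cast
        linarith
  have keyB : ∀ n : ℕ, ((kI : ℝ) + (energy w tb f1 f2 u n : ℝ) + bMax G u Wf) / N
      ≤ B - (play tb f1 f2 u n).pay1 := by
    intro n
    refine le_trans ?_ (key n)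
    rw [div_le_div_iff_of_pos_right hN']
    have := (abs_le.mp (hwM (visit tb f1 f2 u n))).1
    linarith
  refine ⟨keyB, ?_, ?_⟩
  · intro n hk
    have h1 := (div_le_iff₀ hN').mp (keyB n)
    have hk' : (0:ℝ) ≤ (kI : ℝ) + (energy w tb f1 f2 u n : ℝ) := by exact_mod_cast hk
    rw [hbid (play tb f1 f2 u n)]
    rw [div_le_iff₀ (by positivity : (0:ℝ) < 2 * N)]
    have hbm := hbM (play tb f1 f2 u n).cur
    have hexp : (B - (play tb f1 f2 u n).pay1) * (2 * N)
        = 2 * ((B - (play tb f1 f2 u n).pay1) * N) := by ring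
    rw [hexp]
    linarith
  · intro _ n
    have h1 := (div_le_iff₀ hN').mp (keyB n)
    have h2 := (hf2 tb f1 u n).1
    have h3 := (hf2 tb f1 u n).2.1
    have hbud : B - (play tb f1 f2 u n).pay1 ≤ 1 := by
      simp only [Hist.pay2] at h3
      linarith
    have h4 : (B - (play tb f1 f2 u n).pay1) * N ≤ 1 * N :=
      mul_le_mul_of_nonneg_right hbud hN'.le
    linarith
end
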